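/- arXiv:2103.10993 — 6 statements merged into one kernel-verified Lean document; each statement's English description precedes it below -/
import Mathlib

section
/- Fix m : I → ℕ and, for each i ∈ I, nonzero polynomials p_i, q_i ∈ ℂ[u]. Then the set of I-tuples (g_i)_{i∈I} of monic polynomials in ℂ[u] with deg g_i = m(i) which satisfy, for every i ∈ I, the divisibility g_i(u)·q_i(u+d_i) ∣ p_i(u+d_i)·∏_{j : c_{ji}<0} ∏_{t=1}^{−c_{ji}} g_j(u + d_i − d_{ij} − t·d_j) in ℂ[u], is finite. (This is the polynomial-theoretic core of the theorem that a truncated shifted Yangian admits only finitely many irreducible representations in category O^{sh}.) -/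
open Polynomial

private lemma key_ineq {I : Type*} [Fintype I] [DecidableEq I]
    (c : I → I → ℤ) (d : I → ℤ)
    (hcdiag : ∀ i, c i i = 2)
    (hsym : ∀ i j, d i * c i j = d j * c j i)
    (hposdef : (Matrix.of fun i j => ((d i * c i j : ℤ) : ℝ)).PosDef)
    {i j : I} (hij : i ≠ j) :
    0 < (d i : ℝ) + (d j : ℝ) + ((d i * c i j : ℤ) : ℝ) := by
  set M : Matrix I I ℝ := Matrix.of fun i j => ((d i * c i j : ℤ) : ℝ) with hM
  have hx : (Pi.single i 1 + Pi.single j 1 : I → ℝ) ≠ 0 := by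
    intro h
    have := congrFun h i
    simp [Pi.single_apply, hij, if_neg (Ne.symm hij)] at this
  have h := hposdef.dotProduct_mulVec_pos hx
  rw [star_trivial, Matrix.mulVec_add, Matrix.mulVec_single_one, Matrix.mulVec_single_one] at h
  simp only [dotProduct_add, add_dotProduct, dotProduct_single,
    single_dotProduct, Pi.add_apply, Pi.single_apply, mul_one, one_mul,
    if_neg hij, if_neg (Ne.symm hij), if_pos rfl, add_zero, zero_add, Matrix.col_apply] at h
  have e1 : M i i = ((d i * c i i : ℤ) : ℝ) := rfl
  have e2 : M j j = ((d j * c j j : ℤ) : ℝ) := rfl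
  have e3 : M i j = ((d i * c i j : ℤ) : ℝ) := rfl
  have e4 : M j i = ((d j * c j i : ℤ) : ℝ) := rfl
  rw [e1, e2, e3, e4, hcdiag i, hcdiag j, ← hsym i j] at h
  push_cast at h ⊢
  linarith

/-- Finiteness of the set of tuples of monic polynomials of prescribed degrees
satisfying the GKLO divisibility conditions: the polynomial-theoretic core of the
theorem that a truncated shifted Yangian admits only finitely many irreducible
representations in category `O^{sh}`.

Here `I` is the (finite) set of Dynkin nodes, `c` is a generalized Cartan matrix of
finite type (the symmetrized matrix `(d i * c i j)` is positive definite), `d` is a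
symmetrizer with positive entries, and `d_{ij} = d i * c i j / 2`. -/
theorem finiteness_of_GKLO_solutions {I : Type*} [Fintype I] [DecidableEq I]
    (c : I → I → ℤ) (d : I → ℤ)
    (hcdiag : ∀ i, c i i = 2)
    (hcoff : ∀ i j, i ≠ j → c i j ≤ 0)
    (hczero : ∀ i j, c i j = 0 ↔ c j i = 0)
    (hd : ∀ i, 0 < d i)
    (hsym : ∀ i j, d i * c i j = d j * c j i)
    (hposdef : (Matrix.of fun i j => ((d i * c i j : ℤ) : ℝ)).PosDef)
    (m : I → ℕ) (p q : I → ℂ[X]) (hp : ∀ i, p i ≠ 0) (hq : ∀ i, q i ≠ 0) :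
    {g : I → ℂ[X] |
        (∀ i, (g i).Monic ∧ (g i).natDegree = m i) ∧
        ∀ i, g i * (q i).comp (X + C ((d i : ℤ) : ℂ)) ∣
          (p i).comp (X + C ((d i : ℤ) : ℂ)) *
            ∏ j ∈ Finset.univ.filter (fun j => c j i < 0),
              ∏ t ∈ Finset.Icc 1 (-(c j i)).toNat,
                (g j).comp (X + C (((d i : ℤ) : ℂ) - ((d i * c i j : ℤ) : ℂ) / 2 -
                  (t : ℂ) * ((d j : ℤ) : ℂ)))}.Finite := by
  classical
  have key : ∀ i j : I, i ≠ j → 0 < (d i : ℝ) + (d j : ℝ) + ((d i * c i j : ℤ) : ℝ) :=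
    fun i j h => key_ineq c d hcdiag hsym hposdef h
  set N : ℕ := Finset.univ.sup (fun ij : I × I => (-(c ij.1 ij.2)).toNat) with hN
  set S : Finset ℂ := Finset.image
      (fun x : (I × I) × ℕ => (((d x.1.1 : ℤ) : ℂ) - ((d x.1.1 * c x.1.1 x.1.2 : ℤ) : ℂ) / 2
        - (x.2 : ℂ) * ((d x.1.2 : ℤ) : ℂ)))
      (Finset.univ ×ˢ Finset.Icc 1 N) with hSdef
  set P : Finset ℂ := Finset.univ.biUnion
      (fun i => (p i).roots.toFinset.image (fun r => r - ((d i : ℤ) : ℂ))) with hPdef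
  set R : ℕ → Finset ℂ := fun k =>
    Nat.rec P (fun _ Rk => Rk ∪ (S ×ˢ Rk).image (fun z : ℂ × ℂ => z.2 - z.1)) k with hRdef
  have hRsucc : ∀ k, R (k+1) = R k ∪ (S ×ˢ R k).image (fun z : ℂ × ℂ => z.2 - z.1) :=
    fun k => rfl
  have hRmono : ∀ k, P ⊆ R k := by
    intro k; induction k with
    | zero => exact fun x hx => hx
    | succ k ih => intro x hx; rw [hRsucc]; exact Finset.mem_union_left _ (ih hx)
  set L : ℕ := ∑ i, m i with hL
  set val : I → ℂ → ℝ := fun i x => x.re + (d i : ℝ) / 2 with hval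
  -- main root bound
  have main : ∀ g : I → ℂ[X], (∀ i, (g i).Monic ∧ (g i).natDegree = m i) →
      (∀ i, g i * (q i).comp (X + C ((d i : ℤ) : ℂ)) ∣
          (p i).comp (X + C ((d i : ℤ) : ℂ)) *
            ∏ j ∈ Finset.univ.filter (fun j => c j i < 0),
              ∏ t ∈ Finset.Icc 1 (-(c j i)).toNat,
                (g j).comp (X + C (((d i : ℤ) : ℂ) - ((d i * c i j : ℤ) : ℂ) / 2 -
                  (t : ℂ) * ((d j : ℤ) : ℂ)))) →
      ∀ i, ∀ x ∈ (g i).roots, x ∈ R L := by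
    intro g hg hdvd
    have hg0 : ∀ i, g i ≠ 0 := fun i => (hg i).1.ne_zero
    set Q : Finset ((_ : I) × ℂ) := Finset.univ.sigma (fun j => (g j).roots.toFinset) with hQ
    set ab : I → ℂ → Finset ((_ : I) × ℂ) :=
      fun i x => Q.filter (fun q => val i x < val q.1 q.2) with hab
    have step : ∀ i x, x ∈ (g i).roots →
        x ∈ P ∨ ∃ s ∈ S, ∃ j y, y ∈ (g j).roots ∧ x = y - s ∧
          (⟨j, y⟩ : (_ : I) × ℂ) ∈ ab i x ∧ ab j y ⊆ ab i x := by
      intro i x hx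
      have hx0 : (g i).eval x = 0 := (Polynomial.mem_roots'.mp hx).2
      have h0 : Polynomial.eval x (g i * (q i).comp (X + C ((d i : ℤ) : ℂ))) = 0 := by
        rw [eval_mul, hx0, zero_mul]
      have hrhs := eval_eq_zero_of_dvd_of_eval_eq_zero (hdvd i) h0
      rw [eval_mul, Polynomial.eval_prod] at hrhs
      rcases mul_eq_zero.mp hrhs with h | h
      · left
        rw [Polynomial.eval_comp, eval_add, eval_X, eval_C] at h
        refine Finset.mem_biUnion.mpr ⟨i, Finset.mem_univ i, Finset.mem_image.mpr
          ⟨x + ((d i : ℤ) : ℂ), Multiset.mem_toFinset.mpr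
            (Polynomial.mem_roots'.mpr ⟨hp i, h⟩), by ring⟩⟩
      · right
        rw [Finset.prod_eq_zero_iff] at h
        obtain ⟨j, hjmem, h⟩ := h
        rw [Polynomial.eval_prod, Finset.prod_eq_zero_iff] at h
        obtain ⟨t, htmem, h⟩ := h
        rw [Polynomial.eval_comp, eval_add, eval_X, eval_C] at h
        have hji : c j i < 0 := (Finset.mem_filter.mp hjmem).2
        have ht' := Finset.mem_Icc.mp htmem
        have hij : i ≠ j := by
          intro e; rw [← e, hcdiag] at hji; omega
        have hcij : c i j < 0 := by
          rcases lt_or_eq_of_le (hcoff i j hij) with h' | h'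
          · exact h'
          · exact absurd ((hczero i j).mp h') (by omega)
        set a : ℂ := ((d i : ℤ) : ℂ) - ((d i * c i j : ℤ) : ℂ) / 2 - (t : ℂ) * ((d j : ℤ) : ℂ)
          with ha
        have hy : (x + a) ∈ (g j).roots := Polynomial.mem_roots'.mpr ⟨hg0 j, h⟩
        have hare : a = (((d i : ℝ) - ((d i * c i j : ℤ) : ℝ) / 2 - (t : ℝ) * (d j : ℝ) : ℝ) : ℂ) := by
          rw [ha]; push_cast; ring
        have hineq : val i x < val j (x + a) := by
          simp only [hval, Complex.add_re, hare, Complex.ofReal_re]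
          have htle : (t : ℝ) ≤ -(c j i : ℝ) := by
            have := ht'.2
            have h1 : (t : ℝ) ≤ (((-(c j i)).toNat : ℤ) : ℝ) := by exact_mod_cast this
            rwa [Int.toNat_of_nonneg (by omega), Int.cast_neg] at h1
          have hdj : (0 : ℝ) < (d j : ℝ) := by exact_mod_cast hd j
          have hmul : (t : ℝ) * (d j : ℝ) ≤ (-(c j i : ℝ)) * (d j : ℝ) :=
            mul_le_mul_of_nonneg_right htle (le_of_lt hdj)
          have hsymr : (d j : ℝ) * (c j i : ℝ) = (d i : ℝ) * (c i j : ℝ) := by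
            exact_mod_cast congrArg (fun z : ℤ => (z : ℝ)) (hsym j i)
          have hk := key i j hij
          push_cast at hk ⊢
          nlinarith [hk, hmul, hsymr]
        have hsS : a ∈ S := by
          rw [hSdef]
          refine Finset.mem_image.mpr ⟨((i, j), t), ?_, rfl⟩
          refine Finset.mem_product.mpr ⟨Finset.mem_univ _, Finset.mem_Icc.mpr ⟨ht'.1, ?_⟩⟩
          calc t ≤ (-(c j i)).toNat := ht'.2
            _ ≤ N := Finset.le_sup (f := fun ij : I × I => (-(c ij.1 ij.2)).toNat)
                (Finset.mem_univ (j, i))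
        refine ⟨a, hsS, j, x + a, hy, by ring, ?_, ?_⟩
        · exact Finset.mem_filter.mpr ⟨Finset.mem_sigma.mpr
            ⟨Finset.mem_univ _, Multiset.mem_toFinset.mpr hy⟩, hineq⟩
        · intro z hz
          have hz' := Finset.mem_filter.mp hz
          exact Finset.mem_filter.mpr ⟨hz'.1, lt_trans hineq hz'.2⟩
    have claim : ∀ k, ∀ i x, x ∈ (g i).roots → (ab i x).card ≤ k → x ∈ R k := by
      intro k
      induction k with
      | zero =>
        intro i x hx hcard
        rcases step i x hx with h | ⟨s, hs, j, y, hy, hxy, hmem, hsub⟩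
        · exact hRmono 0 h
        · exact absurd (Nat.le_zero.mp hcard) (Finset.card_ne_zero_of_mem hmem)
      | succ k ih =>
        intro i x hx hcard
        rcases step i x hx with h | ⟨s, hs, j, y, hy, hxy, hmem, hsub⟩
        · exact hRmono (k+1) h
        · have hnotmem : (⟨j, y⟩ : (_ : I) × ℂ) ∉ ab j y := by
            simp [hab, Finset.mem_filter]
          have hlt : (ab j y).card < (ab i x).card :=
            Finset.card_lt_card ((Finset.ssubset_iff_of_subset hsub).mpr ⟨_, hmem, hnotmem⟩)
          have hy' := ih j y hy (by omega)
          rw [hRsucc]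
          exact Finset.mem_union_right _ (Finset.mem_image.mpr
            ⟨(s, y), Finset.mk_mem_product hs hy', by rw [hxy]⟩)
    intro i x hx
    refine claim L i x hx ?_
    calc (ab i x).card ≤ Q.card := Finset.card_filter_le _ _
      _ ≤ L := by
        rw [hQ, Finset.card_sigma, hL]
        refine Finset.sum_le_sum (fun j _ => ?_)
        calc (g j).roots.toFinset.card ≤ Multiset.card (g j).roots :=
              Multiset.toFinset_card_le _
          _ = (g j).natDegree :=
              (Polynomial.splits_iff_card_roots.mp (IsAlgClosed.splits (g j)))
          _ = m j := (hg j).2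
  -- conclude finiteness
  have hfin : ∀ i : I, {z : Multiset ℂ | z ≤ m i • (R L).val}.Finite := by
    intro i
    have h1 : {z : Multiset ℂ | z ≤ m i • (R L).val}
        = {z | z ∈ (m i • (R L).val).powerset} := by
      ext z; simp [Multiset.mem_powerset]
    rw [h1]
    exact Multiset.finite_toSet _
  refine Set.Finite.of_finite_image (f := fun g i => (g i).roots) ?_ ?_
  · refine Set.Finite.subset (Set.Finite.pi (fun i => hfin i)) ?_
    rintro _ ⟨g, hg, rfl⟩ i _
    show (g i).roots ≤ m i • (R L).val
    rw [Multiset.le_iff_count]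
    intro z
    by_cases hz : z ∈ (g i).roots
    · have hzR : z ∈ R L := main g hg.1 hg.2 i z hz
      rw [Multiset.count_nsmul, Multiset.count_eq_one_of_mem (R L).nodup hzR, mul_one]
      calc Multiset.count z (g i).roots ≤ Multiset.card (g i).roots :=
            Multiset.count_le_card _ _
        _ = (g i).natDegree :=
            Polynomial.splits_iff_card_roots.mp (IsAlgClosed.splits (g i))
        _ = m i := (hg.1 i).2
    · simp [Multiset.count_eq_zero_of_notMem hz]
  · intro g hg g' hg' he
    funext i
    have e1 := (IsAlgClosed.splits (g i)).eq_prod_roots_of_monic (hg.1 i).1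
    have e2 := (IsAlgClosed.splits (g' i)).eq_prod_roots_of_monic (hg'.1 i).1
    have he' : (g i).roots = (g' i).roots := congrFun he i
    rw [e1, e2, he']
end

section
/- Every e ∈ 𝓡 admits a standard factorization. (Existence part of the lemma on standard factorizations of rational functions, used to factor every irreducible Y(sl₂)-module in category O^{sh} into prefundamental and Kirillov–Reshetikhin modules.) -/
open Polynomial

/-- The set `Δ_b^a ⊆ ℂ`: equal to `{k ∈ ℕ : k < b − a}` if `b − a ∈ ℕ`,
and to `ℕ` (viewed inside `ℂ`) otherwise. -/
def DeltaSet (a b : ℂ) : Set ℂ :=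
  {x | ∃ k : ℕ, x = (k : ℂ) ∧ ∀ n : ℕ, (n : ℂ) = b - a → k < n}

/-- `b − a ∈ ℕ`. -/
def natDiff (a b : ℂ) : Prop := ∃ n : ℕ, (n : ℂ) = b - a

/-- The linear rational function `u − a`. -/
noncomputable def lin (a : ℂ) : RatFunc ℂ :=
  algebraMap (Polynomial ℂ) (RatFunc ℂ) (X - C a)

/-- The rational function `∏_{x∈X}(u−x) · ∏_{(y,z)∈P}(u−y)/(u−z) · ∏_{w∈W}(u−w)⁻¹`. -/
noncomputable def stdProd (X : Multiset ℂ) (P : Multiset (ℂ × ℂ)) (W : Multiset ℂ) :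
    RatFunc ℂ :=
  (X.map lin).prod * (P.map fun p => lin p.1 / lin p.2).prod *
    (W.map fun w => (lin w)⁻¹).prod

/-- `(X, P, W)` is a standard factorization of `e ∈ 𝓡`. -/
def IsStdFact (e : RatFunc ℂ) (X : Multiset ℂ) (P : Multiset (ℂ × ℂ)) (W : Multiset ℂ) :
    Prop :=
  e = stdProd X P W ∧
  (∀ p ∈ P, ∃ n : ℕ, 0 < n ∧ (n : ℂ) = p.2 - p.1) ∧
  (∀ p ∈ P, ∀ q ∈ P,
    ¬(p.2 - q.1 ∈ DeltaSet p.1 p.2 ∧ p.2 - q.1 ∈ DeltaSet q.1 q.2)) ∧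
  (∀ x ∈ X, ∀ p ∈ P, p.2 - x ∉ DeltaSet p.1 p.2) ∧
  (∀ x ∈ X, ∀ w ∈ W, ¬ natDiff x w) ∧
  (∀ w ∈ W, ∀ p ∈ P, w - p.1 ∉ DeltaSet p.1 p.2)

open Classical in
lemma key (N : ℕ) : ∀ X W : Multiset ℂ, X.card ≤ N →
    (∀ x ∈ X, ∀ w ∈ W, x ≠ w) →
    ∃ X' P W', (∀ x ∈ X', x ∈ X) ∧ (∀ w ∈ W', w ∈ W) ∧
      (∀ p ∈ P, p.1 ∈ X ∧ p.2 ∈ W) ∧ IsStdFact (stdProd X 0 W) X' P W' := by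
  induction N with
  | zero =>
    intro X W hcard hdis
    have hX : X = 0 := Multiset.card_eq_zero.mp (Nat.le_zero.mp hcard)
    subst hX
    refine ⟨0, 0, W, by simp, fun w hw => hw, by simp, rfl, by simp, by simp, by simp, by simp, by simp⟩
  | succ N ih =>
    intro X W hcard hdis
    by_cases h : ∃ n : ℕ, ∃ x ∈ X, ∃ w ∈ W, (n : ℂ) = w - x
    · set n₀ := Nat.find h with hn₀def
      obtain ⟨x₀, hx₀, w₀, hw₀, hgap⟩ := Nat.find_spec h
      have hmin : ∀ (k : ℕ) (x w : ℂ), x ∈ X → w ∈ W → (k : ℂ) = w - x → n₀ ≤ k :=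
        fun k x w hx hw hk => Nat.find_min' h ⟨x, hx, w, hw, hk⟩
      have hn₀pos : 0 < n₀ := by
        rcases Nat.eq_zero_or_pos n₀ with h0 | h0
        · exfalso
          apply hdis x₀ hx₀ w₀ hw₀
          have : ((0:ℕ) : ℂ) = w₀ - x₀ := by rw [← h0]; exact hgap
          simp at this
          linear_combination this
        · exact h0
      have hcard' : (X.erase x₀).card ≤ N := by
        have h1 : Multiset.card (X.erase x₀) < Multiset.card X :=
          Multiset.card_erase_lt_of_mem hx₀
        omega
      have hdis' : ∀ x ∈ X.erase x₀, ∀ w ∈ W.erase w₀, x ≠ w :=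
        fun x hx w hw => hdis x (Multiset.mem_of_mem_erase hx) w (Multiset.mem_of_mem_erase hw)
      obtain ⟨X', P', W', hX'sub, hW'sub, hP'sub, hprod, hpos, hii, hiii, hiv, hv⟩ :=
        ih (X.erase x₀) (W.erase w₀) hcard' hdis'
      have hX'X : ∀ x ∈ X', x ∈ X := fun x hx => Multiset.mem_of_mem_erase (hX'sub x hx)
      have hW'W : ∀ w ∈ W', w ∈ W := fun w hw => Multiset.mem_of_mem_erase (hW'sub w hw)
      have hP'XW : ∀ p ∈ P', p.1 ∈ X ∧ p.2 ∈ W := fun p hp =>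
        ⟨Multiset.mem_of_mem_erase (hP'sub p hp).1, Multiset.mem_of_mem_erase (hP'sub p hp).2⟩
      -- key "minimality kills Delta membership" helper
      have hkill : ∀ (c : ℂ) (y z : ℂ), (∃ m : ℕ, (m : ℂ) = z - y) →
          c ∈ DeltaSet x₀ w₀ → (∀ k : ℕ, (k : ℂ) = c → n₀ ≤ k) → False := by
        intro c y z _ hc hge
        obtain ⟨k, hk, hlt⟩ := hc
        exact absurd (hlt n₀ hgap) (not_lt.mpr (hge k hk.symm))
      refine ⟨X', (x₀, w₀) ::ₘ P', W', hX'X, hW'W, ?_, ?_, ?_, ?_, ?_, hiv, ?_⟩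
      · intro p hp
        rcases Multiset.mem_cons.mp hp with h1 | h1
        · subst h1; exact ⟨hx₀, hw₀⟩
        · exact hP'XW p h1
      · -- product
        have hXc : X = x₀ ::ₘ X.erase x₀ := (Multiset.cons_erase hx₀).symm
        have hWc : W = w₀ ::ₘ W.erase w₀ := (Multiset.cons_erase hw₀).symm
        rw [hXc, hWc]
        unfold stdProd at hprod ⊢
        simp only [Multiset.map_cons, Multiset.prod_cons, Multiset.map_zero,
          Multiset.prod_zero, mul_one] at hprod ⊢
        rw [div_eq_mul_inv]
        linear_combination (lin x₀ * (lin w₀)⁻¹) * hprod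
      · -- (i)
        intro p hp
        rcases Multiset.mem_cons.mp hp with h1 | h1
        · subst h1; exact ⟨n₀, hn₀pos, hgap⟩
        · exact hpos p h1
      · -- (ii)
        intro p hp q hq
        rcases Multiset.mem_cons.mp hp with h1 | h1 <;>
          rcases Multiset.mem_cons.mp hq with h2 | h2
        · subst h1; subst h2
          dsimp only
          rintro ⟨⟨k, hk, hlt⟩, -⟩
          have := hlt n₀ hgap
          have hkn : (k : ℂ) = (n₀ : ℂ) := by linear_combination -hgap - hk
          exact absurd (Nat.cast_injective hkn) (Nat.ne_of_lt this)
        · subst h1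
          rintro ⟨⟨k, hk, hlt⟩, -⟩
          have hk' : (k : ℂ) = w₀ - q.1 := hk.symm
          have := hmin k q.1 w₀ (hP'XW q h2).1 hw₀ hk'
          exact absurd (hlt n₀ hgap) (not_lt.mpr this)
        · subst h2
          rintro ⟨-, ⟨k, hk, hlt⟩⟩
          have hk' : (k : ℂ) = p.2 - x₀ := hk.symm
          have := hmin k x₀ p.2 hx₀ (hP'XW p h1).2 hk'
          exact absurd (hlt n₀ hgap) (not_lt.mpr this)
        · exact hii p h1 q h2
      · -- (iii)
        intro x hx p hp
        rcases Multiset.mem_cons.mp hp with h1 | h1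
        · subst h1
          rintro ⟨k, hk, hlt⟩
          have := hmin k x w₀ (Multiset.mem_of_mem_erase (hX'sub x hx)) hw₀ hk.symm
          exact absurd (hlt n₀ hgap) (not_lt.mpr this)
        · exact hiii x hx p h1
      · -- (v)
        intro w hw p hp
        rcases Multiset.mem_cons.mp hp with h1 | h1
        · subst h1
          rintro ⟨k, hk, hlt⟩
          have hk' : (k : ℂ) = w - x₀ := hk.symm
          have := hmin k x₀ w hx₀ (Multiset.mem_of_mem_erase (hW'sub w hw)) hk'
          exact absurd (hlt n₀ hgap) (not_lt.mpr this)
        · exact hv w hw p h1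
    · -- no pairable pair
      push_neg at h
      refine ⟨X, 0, W, fun x hx => hx, fun w hw => hw, by simp, rfl, by simp, by simp, by simp,
        ?_, by simp⟩
      intro x hx w hw ⟨n, hn⟩
      exact h n x hx w hw hn

/-- Every `e ∈ 𝓡` (a nonzero rational function whose numerator and denominator in lowest
terms are monic) admits a standard factorization. -/
theorem stdFact_exists (e : RatFunc ℂ) (he : e ≠ 0)
    (hnum : e.num.Monic) (hden : e.denom.Monic) :
    ∃ (X : Multiset ℂ) (P : Multiset (ℂ × ℂ)) (W : Multiset ℂ), IsStdFact e X P W := by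
  have hcop := RatFunc.isCoprime_num_denom e
  have hnum0 : e.num ≠ 0 := RatFunc.num_ne_zero he
  have hden0 : e.denom ≠ 0 := e.denom_ne_zero
  have hdis : ∀ x ∈ e.num.roots, ∀ w ∈ e.denom.roots, x ≠ w := by
    intro x hx w hw hxw
    subst hxw
    have h1 : (X - C x) ∣ e.num := dvd_iff_isRoot.mpr (isRoot_of_mem_roots hx)
    have h2 : (X - C x) ∣ e.denom := dvd_iff_isRoot.mpr (isRoot_of_mem_roots hw)
    have := hcop.isUnit_of_dvd' h1 h2
    exact (not_isUnit_X_sub_C x) this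
  obtain ⟨X', P, W', _, _, _, hfact⟩ :=
    key e.num.roots.card e.num.roots e.denom.roots le_rfl hdis
  refine ⟨X', P, W', ?_, hfact.2⟩
  have hn : e.num = (e.num.roots.map fun a => X - C a).prod :=
    (IsAlgClosed.splits _).eq_prod_roots_of_monic hnum
  have hd : e.denom = (e.denom.roots.map fun a => X - C a).prod :=
    (IsAlgClosed.splits _).eq_prod_roots_of_monic hden
  have h1 : (algebraMap (Polynomial ℂ) (RatFunc ℂ)) e.num = (e.num.roots.map lin).prod := by
    conv_lhs => rw [hn]
    rw [map_multiset_prod, Multiset.map_map]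
    rfl
  have h2 : (algebraMap (Polynomial ℂ) (RatFunc ℂ)) e.denom = (e.denom.roots.map lin).prod := by
    conv_lhs => rw [hd]
    rw [map_multiset_prod, Multiset.map_map]
    rfl
  have key2 : stdProd e.num.roots 0 e.denom.roots = e := by
    conv_rhs => rw [← RatFunc.num_div_denom e]
    unfold stdProd
    simp only [Multiset.map_zero, Multiset.prod_zero, mul_one]
    rw [Multiset.prod_map_inv, ← h1, ← h2, div_eq_mul_inv]
  rw [← key2]
  exact hfact.1
end

section
/- If (X, P, W) and (X′, P′, W′) are standard factorizations of the same e ∈ 𝓡, then X = X′, W = W′, and P = P′ as multisets; equivalently, the monic polynomials ∏_{x∈X}(u−x) and ∏_{w∈W}(u−w) and the multiset of pairs P are uniquely determined by e. (Uniqueness part of the lemma on standard factorizations.) -/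
open Polynomial

namespace SFX

open scoped Classical

/-- strict lattice order: `b - a` is a positive natural number -/
def slt (a b : ℂ) : Prop := ∃ n : ℕ, 0 < n ∧ (n : ℂ) = b - a

lemma natDiff_refl (a : ℂ) : natDiff a a := ⟨0, by simp⟩

lemma slt_irrefl (a : ℂ) : ¬ slt a a := by
  rintro ⟨n, hn, he⟩
  have : (n : ℂ) = 0 := by linear_combination he
  exact hn.ne' (Nat.cast_eq_zero.mp this)

lemma natDiff_of_slt {a b : ℂ} (h : slt a b) : natDiff a b := ⟨h.choose, h.choose_spec.2⟩

lemma natDiff_trans {a b c : ℂ} (h1 : natDiff a b) (h2 : natDiff b c) : natDiff a c := by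
  obtain ⟨m, hm⟩ := h1; obtain ⟨n, hn⟩ := h2
  exact ⟨m + n, by push_cast; linear_combination hm + hn⟩

lemma slt_of_natDiff_slt {a b c : ℂ} (h1 : natDiff a b) (h2 : slt b c) : slt a c := by
  obtain ⟨m, hm⟩ := h1; obtain ⟨n, hn, he⟩ := h2
  exact ⟨m + n, by omega, by push_cast; linear_combination hm + he⟩

lemma slt_of_slt_natDiff {a b c : ℂ} (h1 : slt a b) (h2 : natDiff b c) : slt a c := by
  obtain ⟨m, hm, he⟩ := h1; obtain ⟨n, hn⟩ := h2
  exact ⟨m + n, by omega, by push_cast; linear_combination he + hn⟩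

lemma slt_trans {a b c : ℂ} (h1 : slt a b) (h2 : slt b c) : slt a c :=
  slt_of_slt_natDiff h1 (natDiff_of_slt h2)

lemma slt_succ_self (a : ℂ) : slt a (a + 1) := ⟨1, by norm_num, by push_cast; ring⟩

lemma natDiff_succ_self (a : ℂ) : natDiff a (a + 1) := natDiff_of_slt (slt_succ_self a)

lemma slt_add_one_iff {a c : ℂ} : slt a (c + 1) ↔ natDiff a c := by
  constructor
  · rintro ⟨n, hn, he⟩
    obtain ⟨m, rfl⟩ : ∃ m, n = m + 1 := ⟨n - 1, by omega⟩
    exact ⟨m, by push_cast at he ⊢; linear_combination he⟩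
  · rintro ⟨m, hm⟩
    exact ⟨m + 1, by omega, by push_cast; linear_combination hm⟩

lemma slt_iff_natDiff_add_one {a b : ℂ} : slt a b ↔ natDiff (a + 1) b := by
  constructor
  · rintro ⟨n, hn, he⟩
    obtain ⟨m, rfl⟩ : ∃ m, n = m + 1 := ⟨n - 1, by omega⟩
    exact ⟨m, by push_cast at he ⊢; linear_combination he⟩
  · rintro ⟨m, hm⟩
    exact ⟨m + 1, by omega, by push_cast; linear_combination hm⟩

lemma natDiff_iff_eq_or_slt {a b : ℂ} : natDiff a b ↔ a = b ∨ slt a b := by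
  constructor
  · rintro ⟨n, hn⟩
    rcases Nat.eq_zero_or_pos n with rfl | hpos
    · left; simp at hn; linear_combination hn
    · right; exact ⟨n, hpos, hn⟩
  · rintro (rfl | h)
    · exact natDiff_refl a
    · exact natDiff_of_slt h

lemma not_natDiff_add_one_self (c : ℂ) : ¬ natDiff (c + 1) c := by
  rintro ⟨n, hn⟩
  have h2 : ((n + 1 : ℕ) : ℂ) = 0 := by push_cast; linear_combination hn
  have := Nat.cast_eq_zero.mp h2
  omega

lemma cmp_below {a b c : ℂ} (h1 : slt a c) (h2 : slt b c) : natDiff a b ∨ natDiff b a := by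
  obtain ⟨m, hm0, hm⟩ := h1; obtain ⟨n, hn0, hn⟩ := h2
  rcases le_total n m with h | h
  · exact Or.inl ⟨m - n, by push_cast [Nat.cast_sub h]; linear_combination hm - hn⟩
  · exact Or.inr ⟨n - m, by push_cast [Nat.cast_sub h]; linear_combination hn - hm⟩

lemma cmp_above {a b c : ℂ} (h1 : slt c a) (h2 : slt c b) : natDiff a b ∨ natDiff b a := by
  obtain ⟨m, hm0, hm⟩ := h1; obtain ⟨n, hn0, hn⟩ := h2
  rcases le_total m n with h | h
  · exact Or.inl ⟨n - m, by push_cast [Nat.cast_sub h]; linear_combination hn - hm⟩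
  · exact Or.inr ⟨m - n, by push_cast [Nat.cast_sub h]; linear_combination hm - hn⟩

lemma slt_of_natDiff_ne {a b : ℂ} (h : natDiff a b) (hne : a ≠ b) : slt a b :=
  (natDiff_iff_eq_or_slt.mp h).resolve_left hne

lemma mem_delta {a b : ℂ} (x : ℂ) (k m : ℕ) (hx : x = (k : ℂ)) (hm : (m : ℂ) = b - a)
    (hk : k < m) : x ∈ DeltaSet a b := by
  refine ⟨k, hx, fun n hn => ?_⟩
  have : n = m := Nat.cast_inj.mp (hn.trans hm.symm)
  omega

noncomputable def cross (P : Multiset (ℂ × ℂ)) (c : ℂ) : ℕ :=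
  (P.filter fun p => slt p.1 c ∧ natDiff c p.2).card

noncomputable def nd (a b : ℂ) : ℕ := if h : natDiff a b then h.choose else 0

lemma nd_spec {a b : ℂ} (h : natDiff a b) : ((nd a b : ℕ) : ℂ) = b - a := by
  rw [nd, dif_pos h]; exact h.choose_spec

lemma card_fst_eq (P : Multiset (ℂ × ℂ)) (t : ℂ) :
    (P.filter fun p => p.1 = t).card = (P.map Prod.fst).count t := by
  rw [Multiset.count_map]
  congr 1
  exact Multiset.filter_congr fun x _ => by constructor <;> exact Eq.symm

lemma card_snd_eq (P : Multiset (ℂ × ℂ)) (t : ℂ) :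
    (P.filter fun p => p.2 = t).card = (P.map Prod.snd).count t := by
  rw [Multiset.count_map]
  congr 1
  exact Multiset.filter_congr fun x _ => by constructor <;> exact Eq.symm

lemma cross_zero_of_mem_X {XX : Multiset ℂ} {P : Multiset (ℂ × ℂ)}
    (h1 : ∀ p ∈ P, ∃ n : ℕ, 0 < n ∧ (n : ℂ) = p.2 - p.1)
    (h3 : ∀ x ∈ XX, ∀ p ∈ P, p.2 - x ∉ DeltaSet p.1 p.2)
    {v : ℂ} (hv : v ∈ XX) : cross P v = 0 := by
  rw [cross, Multiset.card_eq_zero, Multiset.filter_eq_nil]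
  rintro p hp ⟨⟨m, hm0, hm⟩, ⟨k, hk⟩⟩
  obtain ⟨n, hn0, hn⟩ := h1 p hp
  refine h3 v hv p hp (mem_delta _ k n hk.symm hn ?_)
  have : n = k + m := Nat.cast_inj.mp (by push_cast; linear_combination hn - hk - hm)
  omega

lemma cross_zero_of_mem_W {WW : Multiset ℂ} {P : Multiset (ℂ × ℂ)}
    (h1 : ∀ p ∈ P, ∃ n : ℕ, 0 < n ∧ (n : ℂ) = p.2 - p.1)
    (h5 : ∀ w ∈ WW, ∀ p ∈ P, w - p.1 ∉ DeltaSet p.1 p.2)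
    {v : ℂ} (hv : v ∈ WW) : cross P (v + 1) = 0 := by
  rw [cross, Multiset.card_eq_zero, Multiset.filter_eq_nil]
  rintro p hp ⟨hlt, ⟨r, hr⟩⟩
  obtain ⟨k, hk⟩ := slt_add_one_iff.mp hlt
  obtain ⟨n, hn0, hn⟩ := h1 p hp
  refine h5 v hv p hp (mem_delta _ k n hk.symm hn ?_)
  have : n = k + r + 1 := Nat.cast_inj.mp (by push_cast; linear_combination hn - hk - hr)
  omega

lemma cross_step (P : Multiset (ℂ × ℂ))
    (hP : ∀ p ∈ P, ∃ n : ℕ, 0 < n ∧ (n : ℂ) = p.2 - p.1) (c : ℂ) :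
    cross P (c + 1) + (P.map Prod.snd).count c
      = cross P c + (P.map Prod.fst).count c := by
  rw [← card_fst_eq, ← card_snd_eq]
  have e1 := Multiset.filter_add_filter (fun p : ℂ × ℂ => slt p.1 (c+1) ∧ natDiff (c+1) p.2)
    (fun p : ℂ × ℂ => p.2 = c) P
  have e2 := Multiset.filter_add_filter (fun p : ℂ × ℂ => slt p.1 c ∧ natDiff c p.2)
    (fun p : ℂ × ℂ => p.1 = c) P
  have z1 : (P.filter fun p => (slt p.1 (c+1) ∧ natDiff (c+1) p.2) ∧ p.2 = c) = 0 := by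
    rw [Multiset.filter_eq_nil]
    rintro p hp ⟨⟨-, hnd⟩, he⟩
    exact not_natDiff_add_one_self c (he ▸ hnd)
  have z2 : (P.filter fun p => (slt p.1 c ∧ natDiff c p.2) ∧ p.1 = c) = 0 := by
    rw [Multiset.filter_eq_nil]
    rintro p hp ⟨⟨hlt, -⟩, he⟩
    exact slt_irrefl c (he ▸ hlt)
  have hcongr : (P.filter fun p => (slt p.1 (c+1) ∧ natDiff (c+1) p.2) ∨ p.2 = c)
      = (P.filter fun p => (slt p.1 c ∧ natDiff c p.2) ∨ p.1 = c) := by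
    refine Multiset.filter_congr fun p hp => ?_
    obtain ⟨n0, hn0, hne⟩ := hP p hp
    constructor
    · rintro (⟨hlt, hnd⟩ | he)
      · rcases natDiff_iff_eq_or_slt.mp (slt_add_one_iff.mp hlt) with he | hlt'
        · exact Or.inr he
        · exact Or.inl ⟨hlt', natDiff_trans (natDiff_succ_self c) hnd⟩
      · refine Or.inl ⟨?_, he ▸ natDiff_refl c⟩
        have : slt p.1 p.2 := ⟨n0, hn0, hne⟩
        exact he ▸ this
    · rintro (⟨hlt, hnd⟩ | he)
      · rcases natDiff_iff_eq_or_slt.mp hnd with he | hlt'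
        · exact Or.inr he.symm
        · exact Or.inl ⟨slt_of_slt_natDiff hlt (natDiff_succ_self c),
            slt_iff_natDiff_add_one.mp hlt'⟩
      · refine Or.inl ⟨he ▸ slt_succ_self c, ?_⟩
        have : slt p.1 p.2 := ⟨n0, hn0, hne⟩
        exact slt_iff_natDiff_add_one.mp (he ▸ this)
  have := congrArg Multiset.card (e1.trans (by rw [z1, hcongr, ← z2, ← e2]))
  simpa [cross] using this

lemma cross_zero_below (P : Multiset (ℂ × ℂ)) (N : Multiset ℂ)
    (hle : P.map Prod.fst ≤ N) (c : ℂ) :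
    ∃ K : ℕ, ∀ k ≥ K, cross P (c - k) = 0 := by
  refine ⟨(N.map fun n => nd n c).sum + 1, fun k hk => ?_⟩
  rw [cross, Multiset.card_eq_zero, Multiset.filter_eq_nil]
  rintro p hp ⟨⟨m, hm0, hm⟩, -⟩
  have h1 : natDiff p.1 c := ⟨m + k, by push_cast; linear_combination hm⟩
  have h2 : nd p.1 c = m + k := Nat.cast_inj.mp
    ((nd_spec h1).trans (by push_cast; linear_combination -hm))
  have h3 : p.1 ∈ N := Multiset.mem_of_le hle (Multiset.mem_map_of_mem _ hp)
  have h4 : nd p.1 c ≤ (N.map fun n => nd n c).sum := by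
    have hmm : nd p.1 c ∈ N.map fun n => nd n c := Multiset.mem_map_of_mem _ h3
    rw [← Multiset.cons_erase hmm, Multiset.sum_cons]
    exact Nat.le_add_right _ _
  omega

lemma cross_zero_above (P : Multiset (ℂ × ℂ)) (D : Multiset ℂ)
    (hle : P.map Prod.snd ≤ D) (c : ℂ) :
    ∃ K : ℕ, ∀ k ≥ K, cross P (c + k) = 0 := by
  refine ⟨(D.map fun d => nd c d).sum + 1, fun k hk => ?_⟩
  rw [cross, Multiset.card_eq_zero, Multiset.filter_eq_nil]
  rintro p hp ⟨-, ⟨m, hm⟩⟩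
  have h1 : natDiff c p.2 := ⟨m + k, by push_cast; linear_combination hm⟩
  have h2 : nd c p.2 = m + k := Nat.cast_inj.mp
    ((nd_spec h1).trans (by push_cast; linear_combination -hm))
  have h3 : p.2 ∈ D := Multiset.mem_of_le hle (Multiset.mem_map_of_mem _ hp)
  have h4 : nd c p.2 ≤ (D.map fun d => nd c d).sum := by
    have hmm : nd c p.2 ∈ D.map fun d => nd c d := Multiset.mem_map_of_mem _ h3
    rw [← Multiset.cons_erase hmm, Multiset.sum_cons]
    exact Nat.le_add_right _ _
  omega

lemma cross_le
    (X W X' W' : Multiset ℂ) (P Q : Multiset (ℂ × ℂ))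
    (hP1 : ∀ p ∈ P, ∃ n : ℕ, 0 < n ∧ (n : ℂ) = p.2 - p.1)
    (hP3 : ∀ x ∈ X, ∀ p ∈ P, p.2 - x ∉ DeltaSet p.1 p.2)
    (hP5 : ∀ w ∈ W, ∀ p ∈ P, w - p.1 ∉ DeltaSet p.1 p.2)
    (hQ1 : ∀ p ∈ Q, ∃ n : ℕ, 0 < n ∧ (n : ℂ) = p.2 - p.1)
    (hQ4 : ∀ x ∈ X', ∀ w ∈ W', ¬ natDiff x w)
    (hfst : X + P.map Prod.fst = X' + Q.map Prod.fst)
    (hsnd : P.map Prod.snd + W = Q.map Prod.snd + W')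
    (hdis : ∀ v, (X + P.map Prod.fst).count v = 0 ∨ (P.map Prod.snd + W).count v = 0)
    (c : ℂ) : cross P c ≤ cross Q c := by
  by_contra hgt'
  push_neg at hgt'
  have hgt : cross Q c < cross P c := hgt'
  obtain ⟨K1, hK1⟩ := cross_zero_below P (X + P.map Prod.fst) (self_le_add_left _ _) c
  obtain ⟨K2, hK2⟩ := cross_zero_below Q (X + P.map Prod.fst)
    (le_trans (self_le_add_left _ _) (le_of_eq hfst.symm)) c
  obtain ⟨K3, hK3⟩ := cross_zero_above P (P.map Prod.snd + W) (self_le_add_right _ _) c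
  obtain ⟨K4, hK4⟩ := cross_zero_above Q (P.map Prod.snd + W)
    (le_trans (self_le_add_right _ _) (le_of_eq hsnd.symm)) c
  have hbot : ∃ k : ℕ, 0 < X'.count (c - (k : ℕ)) := by
    have hex : ∃ k : ℕ, cross P (c - (k : ℕ)) ≤ cross Q (c - (k : ℕ)) :=
      ⟨max K1 K2, by rw [hK1 _ (le_max_left _ _), hK2 _ (le_max_right _ _)]⟩
    set k₀ := Nat.find hex with hk₀def
    have hspec : cross P (c - (k₀ : ℕ)) ≤ cross Q (c - (k₀ : ℕ)) := Nat.find_spec hex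
    have hmin : ∀ k < k₀, cross Q (c - (k : ℕ)) < cross P (c - (k : ℕ)) := by
      intro k hk; have := Nat.find_min hex hk; omega
    have hk₀pos : k₀ ≠ 0 := by
      intro h
      rw [h] at hspec
      simp only [Nat.cast_zero, sub_zero] at hspec
      omega
    obtain ⟨m, hm⟩ : ∃ m, k₀ = m + 1 := ⟨k₀ - 1, by omega⟩
    set t : ℂ := c - (k₀ : ℕ) with ht
    have ht1 : c - (m : ℕ) = t + 1 := by rw [ht, hm]; push_cast; ring
    have hQt1 : cross Q (t + 1) < cross P (t + 1) := by
      rw [← ht1]; exact hmin m (by omega)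
    have stepP := cross_step P hP1 t
    have stepQ := cross_step Q hQ1 t
    have hcN := congrArg (Multiset.count t) hfst
    have hcD := congrArg (Multiset.count t) hsnd
    simp only [Multiset.count_add] at hcN hcD
    rcases hdis t with h0 | h0 <;> simp only [Multiset.count_add] at h0
    · exfalso
      have hWpos : 0 < W.count t := by omega
      have := cross_zero_of_mem_W hP1 hP5 (Multiset.count_pos.mp hWpos)
      omega
    · refine ⟨k₀, ?_⟩
      rw [← ht]
      omega
  have htop : ∃ j : ℕ, 0 < W'.count (c + (j : ℕ)) := by
    have hex : ∃ j : ℕ, cross P (c + ((j + 1 : ℕ) : ℂ)) ≤ cross Q (c + ((j + 1 : ℕ) : ℂ)) :=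
      ⟨max K3 K4, by rw [hK3 _ (by omega), hK4 _ (by omega)]⟩
    set j₀ := Nat.find hex with hj₀def
    have hspec : cross P (c + ((j₀ + 1 : ℕ) : ℂ)) ≤ cross Q (c + ((j₀ + 1 : ℕ) : ℂ)) :=
      Nat.find_spec hex
    have hmin : ∀ j < j₀, cross Q (c + ((j + 1 : ℕ) : ℂ)) < cross P (c + ((j + 1 : ℕ) : ℂ)) := by
      intro j hj; have := Nat.find_min hex hj; omega
    set b : ℂ := c + (j₀ : ℕ) with hbdef
    have hb : cross Q b < cross P b := by
      rcases Nat.eq_zero_or_pos j₀ with h0 | h0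
      · have : b = c := by rw [hbdef, h0]; simp
        rw [this]; exact hgt
      · obtain ⟨m, hm⟩ : ∃ m, j₀ = m + 1 := ⟨j₀ - 1, by omega⟩
        have heq : c + ((m + 1 : ℕ) : ℂ) = b := by rw [hbdef, hm]
        have h2 := hmin m (by omega)
        rwa [heq] at h2
    have hb1 : cross P (b + 1) ≤ cross Q (b + 1) := by
      have heq : c + ((j₀ + 1 : ℕ) : ℂ) = b + 1 := by rw [hbdef]; push_cast; ring
      rwa [heq] at hspec
    have stepP := cross_step P hP1 b
    have stepQ := cross_step Q hQ1 b
    have hcN := congrArg (Multiset.count b) hfst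
    have hcD := congrArg (Multiset.count b) hsnd
    simp only [Multiset.count_add] at hcN hcD
    rcases hdis b with h0 | h0 <;> simp only [Multiset.count_add] at h0
    · refine ⟨j₀, ?_⟩
      rw [← hbdef]
      omega
    · exfalso
      have hXpos : 0 < X.count b := by omega
      have := cross_zero_of_mem_X hP1 hP3 (Multiset.count_pos.mp hXpos)
      omega
  obtain ⟨kb, hkb⟩ := hbot
  obtain ⟨jt, hjt⟩ := htop
  exact hQ4 _ (Multiset.count_pos.mp hkb) _ (Multiset.count_pos.mp hjt)
    ⟨kb + jt, by push_cast; ring⟩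

lemma exists_max : ∀ (s : Multiset ℂ), s ≠ 0 → ∃ m ∈ s, ∀ x ∈ s, ¬ slt m x := by
  intro s
  induction s using Multiset.induction_on with
  | empty => intro hs; exact absurd rfl hs
  | cons a s ih =>
    intro _
    rcases eq_or_ne s 0 with rfl | hs0
    · refine ⟨a, Multiset.mem_cons_self a 0, ?_⟩
      intro x hx
      rw [Multiset.mem_cons] at hx
      rcases hx with rfl | hx
      · exact slt_irrefl x
      · simp at hx
    · obtain ⟨m, hm, hmax⟩ := ih hs0
      by_cases h : slt m a
      · refine ⟨a, Multiset.mem_cons_self a s, ?_⟩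
        intro x hx hax
        rw [Multiset.mem_cons] at hx
        rcases hx with rfl | hx
        · exact slt_irrefl x hax
        · exact hmax x hx (slt_trans h hax)
      · refine ⟨m, Multiset.mem_cons_of_mem hm, ?_⟩
        intro x hx
        rw [Multiset.mem_cons] at hx
        rcases hx with rfl | hx
        · exact h
        · exact hmax x hx

lemma exists_min (y : ℂ) : ∀ (s : Multiset ℂ), s ≠ 0 → (∀ x ∈ s, slt y x) →
    ∃ m ∈ s, ∀ x ∈ s, natDiff m x := by
  intro s
  induction s using Multiset.induction_on with
  | empty => intro hs _; exact absurd rfl hs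
  | cons a s ih =>
    intro _ hall
    rcases eq_or_ne s 0 with rfl | hs0
    · refine ⟨a, Multiset.mem_cons_self a 0, ?_⟩
      intro x hx
      rw [Multiset.mem_cons] at hx
      rcases hx with rfl | hx
      · exact natDiff_refl x
      · simp at hx
    · obtain ⟨m, hm, hmin⟩ := ih hs0 fun x hx => hall x (Multiset.mem_cons_of_mem hx)
      have hya : slt y a := hall a (Multiset.mem_cons_self a s)
      have hym : slt y m := hall m (Multiset.mem_cons_of_mem hm)
      rcases cmp_above hym hya with h | h
      · refine ⟨m, Multiset.mem_cons_of_mem hm, ?_⟩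
        intro x hx
        rw [Multiset.mem_cons] at hx
        rcases hx with rfl | hx
        · exact h
        · exact hmin x hx
      · refine ⟨a, Multiset.mem_cons_self a s, ?_⟩
        intro x hx
        rw [Multiset.mem_cons] at hx
        rcases hx with rfl | hx
        · exact natDiff_refl x
        · exact natDiff_trans h (hmin x hx)

lemma pair_mem (P : Multiset (ℂ × ℂ))
    (h1 : ∀ p ∈ P, ∃ n : ℕ, 0 < n ∧ (n : ℂ) = p.2 - p.1)
    (h2 : ∀ p ∈ P, ∀ q ∈ P, ¬(p.2 - q.1 ∈ DeltaSet p.1 p.2 ∧ p.2 - q.1 ∈ DeltaSet q.1 q.2))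
    (y t : ℂ)
    (hymax : ∀ x ∈ P.map Prod.fst, ¬ slt y x)
    (hy : y ∈ P.map Prod.fst)
    (ht : t ∈ P.map Prod.snd)
    (hyt : slt y t)
    (htmin : ∀ z ∈ P.map Prod.snd, slt y z → natDiff t z) :
    (y, t) ∈ P := by
  obtain ⟨q, hq, hq2⟩ := Multiset.mem_map.mp ht
  by_cases hq1 : q.1 = y
  · have hqe : q = (y, t) := Prod.ext hq1 hq2
    exact hqe ▸ hq
  · have hq1y : slt q.1 y := by
      have h1q : slt q.1 q.2 := h1 q hq
      have h1q' : slt q.1 t := hq2 ▸ h1q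
      rcases cmp_below h1q' hyt with h | h
      · exact slt_of_natDiff_ne h hq1
      · exact absurd (slt_of_natDiff_ne h fun he => hq1 he.symm)
          (hymax q.1 (Multiset.mem_map_of_mem _ hq))
    obtain ⟨p, hp, hp1⟩ := Multiset.mem_map.mp hy
    have hpslt : slt p.1 p.2 := h1 p hp
    have htp2 : natDiff t p.2 := htmin p.2 (Multiset.mem_map_of_mem _ hp) (hp1 ▸ hpslt)
    by_cases ht2 : t = p.2
    · have hpe : p = (y, t) := Prod.ext hp1 ht2.symm
      exact hpe ▸ hp
    · exfalso
      have htp : slt t p.2 := slt_of_natDiff_ne htp2 ht2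
      obtain ⟨k, hk0, hk⟩ := hyt
      obtain ⟨mm, hmm0, hmm⟩ := hq1y
      obtain ⟨r, hr0, hr⟩ := htp
      refine h2 q hq p hp ⟨?_, ?_⟩
      · refine mem_delta _ k (k + mm) ?_ ?_ (by omega)
        · rw [hq2, hp1]; linear_combination -hk
        · rw [hq2]; push_cast; linear_combination hk + hmm
      · refine mem_delta _ k (k + r) ?_ ?_ (by omega)
        · rw [hq2, hp1]; linear_combination -hk
        · rw [hp1]; push_cast; linear_combination hk + hr

lemma pairs_eq : ∀ (n : ℕ) (P Q : Multiset (ℂ × ℂ)), P.card = n →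
    (∀ p ∈ P, ∃ n : ℕ, 0 < n ∧ (n : ℂ) = p.2 - p.1) →
    (∀ p ∈ P, ∀ q ∈ P, ¬(p.2 - q.1 ∈ DeltaSet p.1 p.2 ∧ p.2 - q.1 ∈ DeltaSet q.1 q.2)) →
    (∀ p ∈ Q, ∃ n : ℕ, 0 < n ∧ (n : ℂ) = p.2 - p.1) →
    (∀ p ∈ Q, ∀ q ∈ Q, ¬(p.2 - q.1 ∈ DeltaSet p.1 p.2 ∧ p.2 - q.1 ∈ DeltaSet q.1 q.2)) →
    P.map Prod.fst = Q.map Prod.fst → P.map Prod.snd = Q.map Prod.snd → P = Q := by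
  intro n
  induction n with
  | zero =>
    intro P Q hc _ _ _ _ hf _
    have hP : P = 0 := Multiset.card_eq_zero.mp hc
    have hQc : Q.card = 0 := by
      have h := congrArg Multiset.card hf
      rw [hP] at h
      simpa using h.symm
    rw [hP, Multiset.card_eq_zero.mp hQc]
  | succ n ih =>
    intro P Q hc hP1 hP2 hQ1 hQ2 hf hs
    have hB : P.map Prod.fst ≠ 0 := by
      intro h0
      have h := congrArg Multiset.card h0
      simp [hc] at h
    obtain ⟨y, hy, hymax⟩ := exists_max (P.map Prod.fst) hB
    obtain ⟨p₀, hp₀, hp₀1⟩ := Multiset.mem_map.mp hy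
    have hp₀slt : slt p₀.1 p₀.2 := hP1 p₀ hp₀
    have hT : ((P.map Prod.snd).filter fun z => slt y z) ≠ 0 := by
      intro h0
      rw [Multiset.filter_eq_nil] at h0
      exact h0 p₀.2 (Multiset.mem_map_of_mem _ hp₀) (hp₀1 ▸ hp₀slt)
    obtain ⟨t, htT, htmin'⟩ := exists_min y _ hT fun x hx => (Multiset.mem_filter.mp hx).2
    have ht : t ∈ P.map Prod.snd := (Multiset.mem_filter.mp htT).1
    have hyt : slt y t := (Multiset.mem_filter.mp htT).2
    have htmin : ∀ z ∈ P.map Prod.snd, slt y z → natDiff t z := fun z hz hyz =>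
      htmin' z (Multiset.mem_filter.mpr ⟨hz, hyz⟩)
    have hyP : (y, t) ∈ P := pair_mem P hP1 hP2 y t hymax hy ht hyt htmin
    have hyQ : (y, t) ∈ Q := pair_mem Q hQ1 hQ2 y t (hf ▸ hymax) (hf ▸ hy) (hs ▸ ht) hyt
      (hs ▸ htmin)
    have hPe := Multiset.cons_erase hyP
    have hQe := Multiset.cons_erase hyQ
    have ef : (P.erase (y, t)).map Prod.fst = (Q.erase (y, t)).map Prod.fst := by
      have e1 : P.map Prod.fst = y ::ₘ (P.erase (y, t)).map Prod.fst := by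
        conv_lhs => rw [← hPe]
        rw [Multiset.map_cons]
      have e2 : Q.map Prod.fst = y ::ₘ (Q.erase (y, t)).map Prod.fst := by
        conv_lhs => rw [← hQe]
        rw [Multiset.map_cons]
      have := e1.symm.trans (hf.trans e2)
      exact (Multiset.cons_inj_right y).mp this
    have es : (P.erase (y, t)).map Prod.snd = (Q.erase (y, t)).map Prod.snd := by
      have e1 : P.map Prod.snd = t ::ₘ (P.erase (y, t)).map Prod.snd := by
        conv_lhs => rw [← hPe]
        rw [Multiset.map_cons]
      have e2 : Q.map Prod.snd = t ::ₘ (Q.erase (y, t)).map Prod.snd := by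
        conv_lhs => rw [← hQe]
        rw [Multiset.map_cons]
      have := e1.symm.trans (hs.trans e2)
      exact (Multiset.cons_inj_right t).mp this
    have hcard : (P.erase (y, t)).card = n := by
      rw [Multiset.card_erase_of_mem hyP, hc]
      rfl
    have hmain := ih (P.erase (y, t)) (Q.erase (y, t)) hcard
      (fun p hp => hP1 p (Multiset.mem_of_mem_erase hp))
      (fun p hp q hq => hP2 p (Multiset.mem_of_mem_erase hp) q (Multiset.mem_of_mem_erase hq))
      (fun p hp => hQ1 p (Multiset.mem_of_mem_erase hp))
      (fun p hp q hq => hQ2 p (Multiset.mem_of_mem_erase hp) q (Multiset.mem_of_mem_erase hq))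
      ef es
    rw [← hPe, ← hQe, hmain]

lemma disj (X W : Multiset ℂ) (P : Multiset (ℂ × ℂ))
    (h1 : ∀ p ∈ P, ∃ n : ℕ, 0 < n ∧ (n : ℂ) = p.2 - p.1)
    (h2 : ∀ p ∈ P, ∀ q ∈ P, ¬(p.2 - q.1 ∈ DeltaSet p.1 p.2 ∧ p.2 - q.1 ∈ DeltaSet q.1 q.2))
    (h3 : ∀ x ∈ X, ∀ p ∈ P, p.2 - x ∉ DeltaSet p.1 p.2)
    (h4 : ∀ x ∈ X, ∀ w ∈ W, ¬ natDiff x w)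
    (h5 : ∀ w ∈ W, ∀ p ∈ P, w - p.1 ∉ DeltaSet p.1 p.2) :
    ∀ v, (X + P.map Prod.fst).count v = 0 ∨ (P.map Prod.snd + W).count v = 0 := by
  intro v
  by_contra hcon
  push_neg at hcon
  obtain ⟨hN, hD⟩ := hcon
  have hN' : v ∈ X ∨ v ∈ P.map Prod.fst := by
    have hpos := Nat.pos_of_ne_zero hN
    rw [Multiset.count_add] at hpos
    by_cases hx : v ∈ X
    · exact Or.inl hx
    · have hx0 : X.count v = 0 := Multiset.count_eq_zero.mpr hx
      exact Or.inr (Multiset.count_pos.mp (by omega))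
  have hD' : v ∈ P.map Prod.snd ∨ v ∈ W := by
    have hpos := Nat.pos_of_ne_zero hD
    rw [Multiset.count_add] at hpos
    by_cases hw : v ∈ W
    · exact Or.inr hw
    · have hw0 : W.count v = 0 := Multiset.count_eq_zero.mpr hw
      exact Or.inl (Multiset.count_pos.mp (by omega))
  rcases hN' with hx | hpf
  · rcases hD' with hps | hw
    · obtain ⟨q, hq, hq2⟩ := Multiset.mem_map.mp hps
      obtain ⟨n0, hn0, hne⟩ := h1 q hq
      refine h3 v hx q hq (mem_delta _ 0 n0 ?_ hne hn0)
      rw [hq2]; simp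
    · exact h4 v hx v hw ⟨0, by simp⟩
  · obtain ⟨p, hp, hp1⟩ := Multiset.mem_map.mp hpf
    rcases hD' with hps | hw
    · obtain ⟨q, hq, hq2⟩ := Multiset.mem_map.mp hps
      obtain ⟨n0, hn0, hne⟩ := h1 q hq
      obtain ⟨n1, hn1, hne1⟩ := h1 p hp
      refine h2 q hq p hp ⟨mem_delta _ 0 n0 ?_ hne hn0, mem_delta _ 0 n1 ?_ hne1 hn1⟩
      · rw [hq2, hp1]; simp
      · rw [hq2, hp1]; simp
    · obtain ⟨n1, hn1, hne1⟩ := h1 p hp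
      refine h5 v hw p hp (mem_delta _ 0 n1 ?_ hne1 hn1)
      rw [hp1]; simp

noncomputable def pol (M : Multiset ℂ) : Polynomial ℂ :=
  (M.map fun a => Polynomial.X - Polynomial.C a).prod

lemma pol_monic (M : Multiset ℂ) : (pol M).Monic :=
  Polynomial.monic_multiset_prod_of_monic _ _ fun a _ => Polynomial.monic_X_sub_C a

lemma pol_ne_zero (M : Multiset ℂ) : pol M ≠ 0 := (pol_monic M).ne_zero

lemma pol_add (M M' : Multiset ℂ) : pol (M + M') = pol M * pol M' := by
  unfold pol
  rw [Multiset.map_add, Multiset.prod_add]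

lemma pol_inj {M M' : Multiset ℂ} (h : pol M = pol M') : M = M' := by
  unfold pol at h
  have h2 := congrArg Polynomial.roots h
  rwa [Polynomial.roots_multiset_prod_X_sub_C, Polynomial.roots_multiset_prod_X_sub_C] at h2

lemma alg_ne_zero {p : Polynomial ℂ} (hp : p ≠ 0) :
    algebraMap (Polynomial ℂ) (RatFunc ℂ) p ≠ 0 := by
  intro h
  exact hp (RatFunc.algebraMap_injective ℂ (h.trans (map_zero _).symm))

lemma map_prod_lin (M : Multiset ℂ) :
    (M.map lin).prod = algebraMap (Polynomial ℂ) (RatFunc ℂ) (pol M) := by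
  unfold pol
  exact Multiset.prod_hom' M (algebraMap (Polynomial ℂ) (RatFunc ℂ)) _

lemma prod_div_eq (P : Multiset (ℂ × ℂ)) :
    (P.map fun p => lin p.1 / lin p.2).prod
      = (P.map fun p => lin p.1).prod / (P.map fun p => lin p.2).prod := by
  induction P using Multiset.induction_on with
  | empty => simp
  | cons a s ih =>
    simp only [Multiset.map_cons, Multiset.prod_cons, ih, div_mul_div_comm]

lemma prod_inv_eq (W : Multiset ℂ) :
    (W.map fun w => (lin w)⁻¹).prod = ((W.map lin).prod)⁻¹ := by
  induction W using Multiset.induction_on with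
  | empty => simp
  | cons a s ih =>
    simp only [Multiset.map_cons, Multiset.prod_cons, ih, mul_inv]

lemma stdProd_eq (X W : Multiset ℂ) (P : Multiset (ℂ × ℂ)) :
    stdProd X P W = algebraMap (Polynomial ℂ) (RatFunc ℂ) (pol (X + P.map Prod.fst))
      / algebraMap (Polynomial ℂ) (RatFunc ℂ) (pol (P.map Prod.snd + W)) := by
  rw [stdProd, prod_div_eq, prod_inv_eq, pol_add, pol_add, map_mul, map_mul]
  have e1 : (P.map fun p => lin p.1) = (P.map Prod.fst).map lin := by
    rw [Multiset.map_map]; rfl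
  have e2 : (P.map fun p => lin p.2) = (P.map Prod.snd).map lin := by
    rw [Multiset.map_map]; rfl
  rw [e1, e2, map_prod_lin, map_prod_lin, map_prod_lin, map_prod_lin]
  ring

lemma ND_eq {X W X' W' : Multiset ℂ} {P Q : Multiset (ℂ × ℂ)}
    (hE : stdProd X P W = stdProd X' Q W')
    (hdis : ∀ v, (X + P.map Prod.fst).count v = 0 ∨ (P.map Prod.snd + W).count v = 0)
    (hdis' : ∀ v, (X' + Q.map Prod.fst).count v = 0 ∨ (Q.map Prod.snd + W').count v = 0) :
    X + P.map Prod.fst = X' + Q.map Prod.fst ∧ P.map Prod.snd + W = Q.map Prod.snd + W' := by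
  rw [stdProd_eq, stdProd_eq] at hE
  rw [div_eq_div_iff (alg_ne_zero (pol_ne_zero _)) (alg_ne_zero (pol_ne_zero _))] at hE
  rw [← map_mul, ← map_mul] at hE
  have hE2 := RatFunc.algebraMap_injective ℂ hE
  rw [← pol_add, ← pol_add] at hE2
  have h := pol_inj hE2
  constructor
  · refine Multiset.ext.mpr fun v => ?_
    have hc := congrArg (Multiset.count v) h
    simp only [Multiset.count_add] at hc ⊢
    rcases hdis v with h1 | h1 <;> rcases hdis' v with h2 | h2 <;>
      simp only [Multiset.count_add] at h1 h2 <;> omega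
  · refine Multiset.ext.mpr fun v => ?_
    have hc := congrArg (Multiset.count v) h
    simp only [Multiset.count_add] at hc ⊢
    rcases hdis v with h1 | h1 <;> rcases hdis' v with h2 | h2 <;>
      simp only [Multiset.count_add] at h1 h2 <;> omega

end SFX

/-- Uniqueness of standard factorizations: the multisets `X`, `W` and the multiset
of pairs `P` in a standard factorization are completely determined by `e`. -/
theorem stdFact_unique (e : RatFunc ℂ)
    (X X' : Multiset ℂ) (P P' : Multiset (ℂ × ℂ)) (W W' : Multiset ℂ)
    (h : IsStdFact e X P W) (h' : IsStdFact e X' P' W') :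
    X = X' ∧ P = P' ∧ W = W' := by
  obtain ⟨hE, h1, h2, h3, h4, h5⟩ := h
  obtain ⟨hE', h1', h2', h3', h4', h5'⟩ := h'
  have hdis := SFX.disj X W P h1 h2 h3 h4 h5
  have hdis' := SFX.disj X' W' P' h1' h2' h3' h4' h5'
  obtain ⟨hfst, hsnd⟩ := SFX.ND_eq (hE.symm.trans hE') hdis hdis'
  have hcross : ∀ c, SFX.cross P c = SFX.cross P' c := fun c =>
    le_antisymm
      (SFX.cross_le X W X' W' P P' h1 h3 h5 h1' h4' hfst hsnd hdis c)
      (SFX.cross_le X' W' X W P' P h1' h3' h5' h1 h4 hfst.symm hsnd.symm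
        (fun v => by rw [← hfst, ← hsnd]; exact hdis v) c)
  have hXc : ∀ v, X.count v = X'.count v := by
    intro v
    have stepP := SFX.cross_step P h1 v
    have stepQ := SFX.cross_step P' h1' v
    have hcN := congrArg (Multiset.count v) hfst
    have hcD := congrArg (Multiset.count v) hsnd
    simp only [Multiset.count_add] at hcN hcD
    have e1 := hcross v
    have e2 := hcross (v + 1)
    rcases hdis v with h0 | h0 <;> simp only [Multiset.count_add] at h0 <;> omega
  have hWc : ∀ v, W.count v = W'.count v := by
    intro v
    have stepP := SFX.cross_step P h1 v
    have stepQ := SFX.cross_step P' h1' v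
    have hcN := congrArg (Multiset.count v) hfst
    have hcD := congrArg (Multiset.count v) hsnd
    simp only [Multiset.count_add] at hcN hcD
    have e1 := hcross v
    have e2 := hcross (v + 1)
    rcases hdis v with h0 | h0 <;> simp only [Multiset.count_add] at h0 <;> omega
  have hX : X = X' := Multiset.ext.mpr hXc
  have hW : W = W' := Multiset.ext.mpr hWc
  refine ⟨hX, ?_, hW⟩
  have hf : P.map Prod.fst = P'.map Prod.fst := by
    have h := hfst
    rw [hX] at h
    exact add_left_cancel h
  have hs : P.map Prod.snd = P'.map Prod.snd := by
    have h := hsnd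
    rw [hW] at h
    exact add_right_cancel h
  exact SFX.pairs_eq P.card P P' rfl h1 h2 h1' h2' hf hs
end

section
/- Let (a_p)_{p∈ℤ} be elements of A vanishing for all p below some bound, let A(u) := Σ_{p∈ℤ} a_p u^{-p-1} ∈ A((u^{-1})), let (x_n)_{n∈ℕ} be elements of A, and let γ ∈ ℂ. Assume [a_{p+1}, x_n] − [a_p, x_{n+1}] = γ·x_n·a_p for all p ∈ ℤ and n ∈ ℕ. Then for every n ∈ ℕ the identity A(u)·x_n = (x_n + γ·Σ_{k≥0} x_{n+k} u^{-k-1})·A(u) holds in A((u^{-1})); in particular, whenever A(u) is invertible, A(u)·x_n·A(u)^{-1} = x_n + γ·Σ_{k≥0} x_{n+k} u^{-k-1}. (This is the commutation of the GKLO truncation series A_i(u) with the Drinfeld generators x_{j,n}^−, with γ = d_i·δ_{ij}.) -/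
private theorem aux_single_mul {A : Type*} [Ring A] (b : ℤ) (r : A) (y : HahnSeries ℤ A) (a : ℤ) :
    (HahnSeries.single b r * y).coeff a = r * y.coeff (a - b) := by
  have := HahnSeries.coeff_single_mul_add (r := r) (x := y) (a := a - b) (b := b)
  simpa using this


/-- Commutation of a truncation (GKLO-type) series with Drinfeld-type generators.

Let `A` be an associative unital `ℂ`-algebra. We encode `A((u^{-1}))` as
`HahnSeries ℤ A` in the variable `t = u^{-1}`, so that a series
`A(u) = Σ_{p∈ℤ} a_p u^{-p-1}` corresponds to the Hahn series `F` with
`F.coeff (p+1) = a_p`, `A` embeds as constant series via `HahnSeries.C`, and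
`Σ_{k≥0} x_{n+k} u^{-k-1}` corresponds to
`single 1 1 * ofPowerSeries ℤ A (PowerSeries.mk fun k => x (n+k))`.

If `[a_{p+1}, x_n] − [a_p, x_{n+1}] = γ·x_n·a_p` for all `p ∈ ℤ`, `n ∈ ℕ`, then
`A(u)·x_n = (x_n + γ·Σ_{k≥0} x_{n+k} u^{-k-1})·A(u)`, and consequently, whenever
`A(u)` is invertible, `A(u)·x_n·A(u)^{-1} = x_n + γ·Σ_{k≥0} x_{n+k} u^{-k-1}`. -/
theorem GKLO_commutation {A : Type*} [Ring A] [Algebra ℂ A]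
    (F : HahnSeries ℤ A) (N : ℤ) (hbd : ∀ p : ℤ, p < N → F.coeff (p + 1) = 0)
    (x : ℕ → A) (γ : ℂ)
    (hcomm : ∀ (p : ℤ) (n : ℕ),
      (F.coeff (p + 1 + 1) * x n - x n * F.coeff (p + 1 + 1)) -
        (F.coeff (p + 1) * x (n + 1) - x (n + 1) * F.coeff (p + 1)) =
      γ • (x n * F.coeff (p + 1))) :
    ∀ n : ℕ,
      F * HahnSeries.C (x n) =
        (HahnSeries.C (x n) +
          γ • (HahnSeries.single (1 : ℤ) (1 : A) *
            HahnSeries.ofPowerSeries ℤ A (PowerSeries.mk fun k => x (n + k)))) * F ∧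
      ∀ hF : IsUnit F,
        F * HahnSeries.C (x n) * (hF.unit⁻¹ : (HahnSeries ℤ A)ˣ).val =
          HahnSeries.C (x n) +
            γ • (HahnSeries.single (1 : ℤ) (1 : A) *
              HahnSeries.ofPowerSeries ℤ A (PowerSeries.mk fun k => x (n + k))) := by
  -- coefficients vanish below N + 1
  have hF0 : ∀ q : ℤ, q < N + 1 → F.coeff q = 0 := by
    intro q hq
    have := hbd (q - 1) (by omega)
    simpa using this
  -- telescoping identity
  have key : ∀ (K : ℕ) (m : ℤ) (n : ℕ),
      F.coeff m * x n - x n * F.coeff m =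
        γ • (∑ k ∈ Finset.range K, x (n + k) * F.coeff (m - 1 - k)) +
        (F.coeff (m - K) * x (n + K) - x (n + K) * F.coeff (m - K)) := by
    intro K
    induction K with
    | zero => intro m n; simp
    | succ K ih =>
      intro m n
      rw [ih m n]
      have h := hcomm (m - K - 2) (n + K)
      have e1 : m - (K : ℤ) - 2 + 1 + 1 = m - K := by ring
      have e2 : m - (K : ℤ) - 2 + 1 = m - ((K : ℕ) + 1 : ℕ) := by push_cast; ring
      have e3 : m - (K : ℤ) - 2 + 1 = m - 1 - (K : ℤ) := by ring
      rw [e1] at h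
      have h' : F.coeff (m - K) * x (n + K) - x (n + K) * F.coeff (m - K) =
          γ • (x (n + K) * F.coeff (m - 1 - K)) +
          (F.coeff (m - ((K : ℕ) + 1 : ℕ)) * x (n + (K + 1)) -
            x (n + (K + 1)) * F.coeff (m - ((K : ℕ) + 1 : ℕ))) := by
        rw [← e2, ← e3]
        have hnk : n + K + 1 = n + (K + 1) := by omega
        rw [← hnk]
        exact eq_add_of_sub_eq h
      rw [h', Finset.sum_range_succ, smul_add]
      abel
  intro n
  set g : ℕ → A := fun k => x (n + k) with hg
  set P : HahnSeries ℤ A := HahnSeries.ofPowerSeries ℤ A (PowerSeries.mk g) with hP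
  have hP1 : ∀ k : ℕ, P.coeff (k : ℤ) = g k := by
    intro k
    rw [hP, HahnSeries.ofPowerSeries_apply_coeff]
    simp
  have hP2 : ∀ j : ℤ, j < 0 → P.coeff j = 0 := by
    intro j hj
    rw [hP, HahnSeries.ofPowerSeries_apply]
    apply HahnSeries.embDomain_notin_range
    rintro ⟨k, rfl⟩
    simp at hj
    omega
  set Q : HahnSeries ℤ A := HahnSeries.single (1 : ℤ) (1 : A) * P with hQ
  have hQc : ∀ j : ℤ, Q.coeff j = P.coeff (j - 1) := by
    intro j
    rw [hQ, aux_single_mul, one_mul]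
  -- main coefficientwise identity
  have main : F * HahnSeries.C (x n) = (HahnSeries.C (x n) + γ • Q) * F := by
    ext m
    set K : ℕ := (m - N).toNat with hK
    have hKm : (m : ℤ) - K ≤ N := by
      have := Int.self_le_toNat (m - N)
      omega
    -- decompose Q
    set Q0 : HahnSeries ℤ A :=
      ∑ k ∈ Finset.range K, HahnSeries.single ((k : ℤ) + 1) (g k) with hQ0
    set T : HahnSeries ℤ A := Q - Q0 with hT
    have hQ0c : ∀ j : ℤ, Q0.coeff j =
        ∑ k ∈ Finset.range K, (HahnSeries.single ((k : ℤ) + 1) (g k)).coeff j := by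
      intro j
      rw [hQ0]
      exact map_sum (HahnSeries.coeff.addMonoidHom j) _ _
    have hTc : ∀ j : ℤ, j < (K : ℤ) + 1 → T.coeff j = 0 := by
      intro j hj
      rw [hT, HahnSeries.coeff_sub, hQc, hQ0c]
      by_cases hj0 : j < 1
      · rw [hP2 _ (by omega)]
        rw [Finset.sum_eq_zero, sub_zero]
        intro k hk
        exact HahnSeries.coeff_single_of_ne (by omega)
      · push_neg at hj0
        obtain ⟨k0, rfl⟩ : ∃ k0 : ℕ, j = (k0 : ℤ) + 1 := ⟨(j - 1).toNat, by omega⟩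
        have hk0K : k0 < K := by omega
        rw [show ((k0 : ℤ) + 1) - 1 = (k0 : ℤ) by ring, hP1]
        rw [Finset.sum_eq_single k0]
        · rw [HahnSeries.coeff_single_same, sub_self]
        · intro b _ hb
          exact HahnSeries.coeff_single_of_ne (by omega)
        · intro hk0
          exact absurd hk0K (by simpa using hk0)
    have hTF : (T * F).coeff m = 0 := by
      by_contra h
      have hm : m ∈ (T * F).support := h
      obtain ⟨i, hi, j, hj, hij⟩ := HahnSeries.support_mul_subset hm
      have hiK : (K : ℤ) + 1 ≤ i := by
        by_contra hi'
        exact hi (hTc i (by omega))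
      have hjN : N + 1 ≤ j := by
        by_contra hj'
        exact hj (hF0 j (by omega))
      have hij' : i + j = m := hij
      linarith [hKm, hiK, hjN, hij']
    have hQ0F : (Q0 * F).coeff m =
        ∑ k ∈ Finset.range K, x (n + k) * F.coeff (m - 1 - k) := by
      rw [hQ0, Finset.sum_mul]
      have hms : (∑ i ∈ Finset.range K, (HahnSeries.single ((i : ℤ) + 1) (g i) * F)).coeff m
          = ∑ i ∈ Finset.range K, (HahnSeries.single ((i : ℤ) + 1) (g i) * F).coeff m :=
        map_sum (HahnSeries.coeff.addMonoidHom m) _ _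
      rw [hms]
      refine Finset.sum_congr rfl fun k _ => ?_
      rw [aux_single_mul]
      congr 1
      ring
    have hcm := key K m n
    rw [hF0 (m - K) (by omega)] at hcm
    simp only [zero_mul, mul_zero, sub_zero, zero_sub, add_zero] at hcm
    -- assemble
    have hQdecomp : Q = Q0 + T := by rw [hT]; abel
    rw [HahnSeries.C_apply, HahnSeries.coeff_mul_single_zero, add_mul,
      HahnSeries.coeff_add, HahnSeries.coeff_single_zero_mul, smul_mul_assoc,
      HahnSeries.coeff_smul, hQdecomp, add_mul, HahnSeries.coeff_add, hQ0F, hTF, add_zero]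
    exact sub_eq_iff_eq_add'.mp hcm
  refine ⟨main, fun hF => ?_⟩
  rw [main, mul_assoc, hF.mul_val_inv, mul_one]
end

section
/- If (X, P, W) is a standard factorization of e ∈ 𝓡, then the monic polynomials N(u) = ∏_{x∈X}(u−x)·∏_{(y,z)∈P}(u−y) and D(u) = ∏_{(y,z)∈P}(u−z)·∏_{w∈W}(u−w) are coprime in ℂ[u]; consequently N and D are the numerator and denominator of e in lowest terms. -/
open Polynomial

/-- `0 ∈ Δ_z^y` whenever `z − y` is a positive natural number. -/
lemma zero_mem_DeltaSet {y z : ℂ} (h : ∃ n : ℕ, 0 < n ∧ (n : ℂ) = z - y) :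
    (0 : ℂ) ∈ DeltaSet y z := by
  obtain ⟨n, hn, hnz⟩ := h
  exact ⟨0, by norm_num, fun m hm => by
    have : (m : ℂ) = (n : ℂ) := by rw [hm, hnz]
    have : m = n := Nat.cast_injective this
    omega⟩

lemma isCoprime_multiset_prod_left {R : Type*} [CommSemiring R] {x : R} {s : Multiset R}
    (h : ∀ a ∈ s, IsCoprime a x) : IsCoprime s.prod x := by
  induction s using Multiset.induction with
  | empty => simpa using isCoprime_one_left
  | cons a s ih =>
    rw [Multiset.prod_cons]
    exact IsCoprime.mul_left (h a (Multiset.mem_cons_self a s))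
      (ih fun b hb => h b (Multiset.mem_cons_of_mem hb))

lemma isCoprime_multiset_prod_right {R : Type*} [CommSemiring R] {x : R} {s : Multiset R}
    (h : ∀ a ∈ s, IsCoprime x a) : IsCoprime x s.prod :=
  (isCoprime_multiset_prod_left fun a ha => (h a ha).symm).symm

lemma isCoprime_linear {a b : ℂ} (h : a ≠ b) :
    IsCoprime (Polynomial.X - C a) (Polynomial.X - C b) :=
  Polynomial.isCoprime_X_sub_C_of_isUnit_sub (isUnit_iff_ne_zero.mpr (sub_ne_zero.mpr h))

/-- If `(X, P, W)` is a standard factorization of `e`, then the monic polynomials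
`N(u) = ∏_{x∈X}(u−x)·∏_{(y,z)∈P}(u−y)` and `D(u) = ∏_{(y,z)∈P}(u−z)·∏_{w∈W}(u−w)` are
coprime in `ℂ[u]`, and consequently they are the numerator and the denominator of `e`
in lowest terms. -/
theorem stdFact_num_denom (e : RatFunc ℂ)
    (X : Multiset ℂ) (P : Multiset (ℂ × ℂ)) (W : Multiset ℂ)
    (h : IsStdFact e X P W) :
    IsCoprime
      ((X.map fun x => Polynomial.X - C x).prod * (P.map fun p => Polynomial.X - C p.1).prod)
      ((P.map fun p => Polynomial.X - C p.2).prod * (W.map fun w => Polynomial.X - C w).prod) ∧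
    e.num =
      (X.map fun x => Polynomial.X - C x).prod * (P.map fun p => Polynomial.X - C p.1).prod ∧
    e.denom =
      (P.map fun p => Polynomial.X - C p.2).prod * (W.map fun w => Polynomial.X - C w).prod := by
  obtain ⟨he, hpos, hii, hiii, hiv, hv⟩ := h
  set N : Polynomial ℂ :=
    (X.map fun x => Polynomial.X - C x).prod * (P.map fun p => Polynomial.X - C p.1).prod with hN
  set D : Polynomial ℂ :=
    (P.map fun p => Polynomial.X - C p.2).prod * (W.map fun w => Polynomial.X - C w).prod with hD
  -- distinctness of roots
  have hxz : ∀ x ∈ X, ∀ p ∈ P, x ≠ p.2 := by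
    intro x hx p hp hxe
    exact hiii x hx p hp (by rw [hxe, sub_self]; exact zero_mem_DeltaSet (hpos p hp))
  have hxw : ∀ x ∈ X, ∀ w ∈ W, x ≠ w := by
    intro x hx w hw hxe
    exact hiv x hx w hw ⟨0, by simp [hxe]⟩
  have hyz : ∀ p ∈ P, ∀ q ∈ P, p.1 ≠ q.2 := by
    intro p hp q hq hye
    refine hii q hq p hp ?_
    have h0 : q.2 - p.1 = 0 := by rw [← hye, sub_self]
    rw [h0]
    exact ⟨zero_mem_DeltaSet (hpos q hq), zero_mem_DeltaSet (hpos p hp)⟩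
  have hyw : ∀ p ∈ P, ∀ w ∈ W, p.1 ≠ w := by
    intro p hp w hw hye
    refine hv w hw p hp ?_
    rw [← hye, sub_self]
    exact zero_mem_DeltaSet (hpos p hp)
  -- coprimality
  have hcop : IsCoprime N D := by
    rw [hN, hD]
    apply IsCoprime.mul_left <;> apply IsCoprime.mul_right <;>
      apply isCoprime_multiset_prod_left <;> intro a ha <;>
        apply isCoprime_multiset_prod_right <;> intro b hb
    · obtain ⟨x, hx, rfl⟩ := Multiset.mem_map.mp ha
      obtain ⟨p, hp, rfl⟩ := Multiset.mem_map.mp hb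
      exact isCoprime_linear (hxz x hx p hp)
    · obtain ⟨x, hx, rfl⟩ := Multiset.mem_map.mp ha
      obtain ⟨w, hw, rfl⟩ := Multiset.mem_map.mp hb
      exact isCoprime_linear (hxw x hx w hw)
    · obtain ⟨p, hp, rfl⟩ := Multiset.mem_map.mp ha
      obtain ⟨q, hq, rfl⟩ := Multiset.mem_map.mp hb
      exact isCoprime_linear (hyz p hp q hq)
    · obtain ⟨p, hp, rfl⟩ := Multiset.mem_map.mp ha
      obtain ⟨w, hw, rfl⟩ := Multiset.mem_map.mp hb
      exact isCoprime_linear (hyw p hp w hw)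
  -- monicity
  have hmonic : ∀ (s : Multiset ℂ), ((s.map fun a => Polynomial.X - C a).prod).Monic := by
    intro s
    refine Polynomial.monic_multiset_prod_of_monic _ _ fun a _ => Polynomial.monic_X_sub_C a
  have hNm : N.Monic := by
    rw [hN]
    have := hmonic (X + P.map Prod.fst)
    simpa [Multiset.map_add, Multiset.prod_add, Multiset.map_map] using this
  have hDm : D.Monic := by
    rw [hD]
    have := hmonic (P.map Prod.snd + W)
    simpa [Multiset.map_add, Multiset.prod_add, Multiset.map_map] using this
  have hDne : D ≠ 0 := hDm.ne_zero
  -- e = algebraMap N / algebraMap D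
  have prod_map_lin : ∀ {ι : Type} (s : Multiset ι) (g : ι → ℂ),
      (s.map fun a => algebraMap (Polynomial ℂ) (RatFunc ℂ) (Polynomial.X - C (g a))).prod
        = algebraMap (Polynomial ℂ) (RatFunc ℂ)
            ((s.map fun a => Polynomial.X - C (g a)).prod) := by
    intro ι s g
    rw [map_multiset_prod, Multiset.map_map]
    rfl
  have hsp : e = algebraMap (Polynomial ℂ) (RatFunc ℂ) N /
      algebraMap (Polynomial ℂ) (RatFunc ℂ) D := by
    rw [he]
    unfold stdProd lin
    rw [Multiset.prod_map_div, Multiset.prod_map_inv,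
      show (X.map fun a => algebraMap (Polynomial ℂ) (RatFunc ℂ) (Polynomial.X - C a)).prod
        = algebraMap (Polynomial ℂ) (RatFunc ℂ)
            ((X.map fun a => Polynomial.X - C a).prod) from prod_map_lin X id,
      show (P.map fun p => algebraMap (Polynomial ℂ) (RatFunc ℂ) (Polynomial.X - C p.1)).prod
        = algebraMap (Polynomial ℂ) (RatFunc ℂ)
            ((P.map fun p => Polynomial.X - C p.1).prod) from prod_map_lin P Prod.fst,
      show (P.map fun p => algebraMap (Polynomial ℂ) (RatFunc ℂ) (Polynomial.X - C p.2)).prod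
        = algebraMap (Polynomial ℂ) (RatFunc ℂ)
            ((P.map fun p => Polynomial.X - C p.2).prod) from prod_map_lin P Prod.snd,
      show (W.map fun a => algebraMap (Polynomial ℂ) (RatFunc ℂ) (Polynomial.X - C a)).prod
        = algebraMap (Polynomial ℂ) (RatFunc ℂ)
            ((W.map fun a => Polynomial.X - C a).prod) from prod_map_lin W id]
    rw [hN, hD, map_mul, map_mul, div_eq_mul_inv, div_eq_mul_inv, mul_inv]
    ring
  -- cross multiplication
  have hcross : e.num * D = N * e.denom := by
    have h1 : algebraMap (Polynomial ℂ) (RatFunc ℂ) e.num /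
        algebraMap (Polynomial ℂ) (RatFunc ℂ) e.denom =
        algebraMap (Polynomial ℂ) (RatFunc ℂ) N / algebraMap (Polynomial ℂ) (RatFunc ℂ) D := by
      rw [RatFunc.num_div_denom, hsp]
    have h2 := (div_eq_div_iff (RatFunc.algebraMap_ne_zero (RatFunc.denom_ne_zero e))
      (RatFunc.algebraMap_ne_zero hDne)).mp h1
    rw [← map_mul, ← map_mul] at h2
    exact RatFunc.algebraMap_injective ℂ h2
  have hd1 : e.denom ∣ D := by
    have : e.denom ∣ e.num * D := Dvd.intro N (by rw [hcross]; ring)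
    exact ((RatFunc.isCoprime_num_denom e).symm).dvd_of_dvd_mul_left this
  have hd2 : D ∣ e.denom := by
    have : D ∣ N * e.denom := Dvd.intro e.num (by rw [← hcross]; ring)
    exact hcop.symm.dvd_of_dvd_mul_left this
  have hdenom : e.denom = D :=
    Polynomial.eq_of_monic_of_associated (RatFunc.monic_denom e) hDm
      (associated_of_dvd_dvd hd1 hd2)
  have hnum : e.num = N := by
    have : e.num * D = N * D := by rw [hcross, hdenom]
    exact mul_right_cancel₀ hDne this
  exact ⟨hcop, hnum, hdenom⟩
end

section
/- Let e ∈ 𝓡, let y₀ be a zero and z₀ a pole of e with z₀ − y₀ ∈ ℕ, and assume the minimality property (H1): for every zero y and every pole z of e, z − y ∈ ℕ implies z − y ≥ z₀ − y₀. If (X, P, W) is a standard factorization of f := ((u−z₀)/(u−y₀))·e, then (X, P + {(y₀, z₀)}, W) is a standard factorization of e. -/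
open Polynomial

section Aux

lemma lin_ne_zero (a : ℂ) : lin a ≠ 0 :=
  RatFunc.algebraMap_ne_zero (X_sub_C_ne_zero a)

/-- The polynomial `∏_{a∈s} (X − a)`. -/
noncomputable def mprod (s : Multiset ℂ) : Polynomial ℂ :=
  (s.map fun a => Polynomial.X - C a).prod

lemma mprod_ne_zero (s : Multiset ℂ) : mprod s ≠ 0 := by
  rw [mprod, Ne, Multiset.prod_eq_zero_iff]
  rintro hmem
  obtain ⟨a, _, hza⟩ := Multiset.mem_map.mp hmem
  exact X_sub_C_ne_zero a hza

lemma isRoot_mprod {s : Multiset ℂ} {t : ℂ} : (mprod s).IsRoot t ↔ t ∈ s := by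
  rw [mprod, IsRoot, eval_multiset_prod, Multiset.map_map, Multiset.prod_eq_zero_iff]
  simp [Function.comp, sub_eq_zero, eq_comm]

lemma map_mprod (s : Multiset ℂ) :
    algebraMap (Polynomial ℂ) (RatFunc ℂ) (mprod s) = (s.map lin).prod := by
  rw [mprod, map_multiset_prod, Multiset.map_map]
  rfl

lemma mprod_add (s t : Multiset ℂ) : mprod (s + t) = mprod s * mprod t := by
  rw [mprod, mprod, mprod, Multiset.map_add, Multiset.prod_add]

lemma stdProd_eq (S : Multiset ℂ) (P : Multiset (ℂ × ℂ)) (W : Multiset ℂ) :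
    stdProd S P W =
      algebraMap (Polynomial ℂ) (RatFunc ℂ) (mprod (S + P.map Prod.fst)) /
        algebraMap (Polynomial ℂ) (RatFunc ℂ) (mprod (P.map Prod.snd + W)) := by
  rw [stdProd, Multiset.prod_map_div, Multiset.prod_map_inv, mprod_add, mprod_add,
    map_mul, map_mul, map_mprod, map_mprod, map_mprod, map_mprod,
    Multiset.map_map, Multiset.map_map]
  simp only [Function.comp]
  rw [div_eq_mul_inv, div_eq_mul_inv, mul_inv]
  ring

lemma num_mul_eq {f : RatFunc ℂ} {N D : Polynomial ℂ} (hD : D ≠ 0)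
    (hf : f = algebraMap (Polynomial ℂ) (RatFunc ℂ) N /
      algebraMap (Polynomial ℂ) (RatFunc ℂ) D) :
    f.num * D = N * f.denom := by
  apply RatFunc.algebraMap_injective ℂ
  rw [map_mul, map_mul]
  rw [← RatFunc.num_div_denom f] at hf
  rw [div_eq_div_iff (RatFunc.algebraMap_ne_zero (RatFunc.denom_ne_zero f))
    (RatFunc.algebraMap_ne_zero hD)] at hf
  exact hf

lemma ratfunc_cross {e f : RatFunc ℂ} {A B : Polynomial ℂ} (hB : B ≠ 0)
    (hf : f = algebraMap (Polynomial ℂ) (RatFunc ℂ) A /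
      algebraMap (Polynomial ℂ) (RatFunc ℂ) B * e) :
    f.num * (B * e.denom) = A * e.num * f.denom := by
  have h2 : f = algebraMap (Polynomial ℂ) (RatFunc ℂ) (A * e.num) /
      algebraMap (Polynomial ℂ) (RatFunc ℂ) (B * e.denom) := by
    rw [hf]
    conv_lhs => rw [← RatFunc.num_div_denom e]
    rw [div_mul_div_comm, ← map_mul, ← map_mul]
  exact num_mul_eq (mul_ne_zero hB (RatFunc.denom_ne_zero e)) h2

lemma not_isRoot_of_coprime {p q : Polynomial ℂ} (h : IsCoprime p q) {a : ℂ}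
    (hp : p.IsRoot a) : ¬ q.IsRoot a := by
  intro hq
  obtain ⟨u, v, huv⟩ := h
  have h1 := congrArg (fun r : Polynomial ℂ => r.eval a) huv
  simp only [eval_add, eval_mul, eval_one] at h1
  rw [show p.eval a = 0 from hp, show q.eval a = 0 from hq] at h1
  simp at h1

lemma zero_mem_deltaSet {a b : ℂ} {n : ℕ} (hn : (n : ℂ) = b - a) (hpos : 0 < n) :
    (0 : ℂ) ∈ DeltaSet a b := by
  refine ⟨0, by simp, fun m hm => ?_⟩
  have : m = n := Nat.cast_injective (hm.trans hn.symm)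
  omega

lemma deltaSet_elim {a b x : ℂ} {n : ℕ} (hn : (n : ℂ) = b - a) (hx : x ∈ DeltaSet a b) :
    ∃ k : ℕ, x = (k : ℂ) ∧ k < n := by
  obtain ⟨k, hk, hlt⟩ := hx
  exact ⟨k, hk, hlt n hn⟩

end Aux

/-- Let `y₀` be a zero and `z₀` a pole of `e ∈ 𝓡` with `z₀ − y₀ ∈ ℕ`, minimal among all
differences `z − y ∈ ℕ` of a pole `z` and a zero `y` of `e` (hypothesis (H1)). If
`(X, P, W)` is a standard factorization of `f = ((u−z₀)/(u−y₀))·e`, then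
`(X, P + {(y₀,z₀)}, W)` is a standard factorization of `e`. -/
theorem stdFact_extend (e : RatFunc ℂ) (he : e ≠ 0)
    (hnum : e.num.Monic) (hden : e.denom.Monic)
    (y₀ z₀ : ℂ) (hy₀ : e.num.IsRoot y₀) (hz₀ : e.denom.IsRoot z₀)
    (n₀ : ℕ) (hn₀ : (n₀ : ℂ) = z₀ - y₀)
    (H1 : ∀ y z : ℂ, e.num.IsRoot y → e.denom.IsRoot z →
      ∀ m : ℕ, (m : ℂ) = z - y → n₀ ≤ m)
    (X : Multiset ℂ) (P : Multiset (ℂ × ℂ)) (W : Multiset ℂ)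
    (h : IsStdFact (lin z₀ / lin y₀ * e) X P W) :
    IsStdFact e X ((y₀, z₀) ::ₘ P) W := by
  obtain ⟨hprod, hposP, hPP, hXP, hXW, hWP⟩ := h
  set f := lin z₀ / lin y₀ * e with hfdef
  have hf0 : f ≠ 0 :=
    mul_ne_zero (div_ne_zero (lin_ne_zero z₀) (lin_ne_zero y₀)) he
  have hfnum_ne : f.num ≠ 0 := RatFunc.num_ne_zero hf0
  have hcopf := RatFunc.isCoprime_num_denom f
  have hcope := RatFunc.isCoprime_num_denom e
  have hy₀z₀ : y₀ ≠ z₀ := by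
    intro hc
    exact not_isRoot_of_coprime hcope hy₀ (hc ▸ hz₀)
  have n₀pos : 0 < n₀ := by
    rcases Nat.eq_zero_or_pos n₀ with h0 | h0
    · exfalso
      apply hy₀z₀
      have : (0 : ℂ) = z₀ - y₀ := by rw [← hn₀, h0]; simp
      have := sub_eq_zero.mp this.symm
      exact this.symm
    · exact h0
  -- cross–multiplied identity relating f and e
  have hfC : f.num * ((Polynomial.X - C y₀) * e.denom)
      = (Polynomial.X - C z₀) * e.num * f.denom :=
    ratfunc_cross (X_sub_C_ne_zero y₀) hfdef
  -- cross–multiplied identity from the standard factorization of f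
  have hfB : f.num * mprod (P.map Prod.snd + W)
      = mprod (X + P.map Prod.fst) * f.denom :=
    num_mul_eq (mprod_ne_zero _) (hprod.trans (stdProd_eq X P W))
  -- membership → roots of f.num / f.denom
  have hfnum : ∀ a : ℂ, a ∈ X + P.map Prod.fst → a ∉ P.map Prod.snd + W →
      f.num.IsRoot a := by
    intro a haN haD
    have h1 := congrArg (fun p : Polynomial ℂ => p.eval a) hfB
    simp only [eval_mul] at h1
    rw [show (mprod (X + P.map Prod.fst)).eval a = 0 from isRoot_mprod.mpr haN,
      zero_mul] at h1
    have hD0 : (mprod (P.map Prod.snd + W)).eval a ≠ 0 :=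
      fun hc => haD (isRoot_mprod.mp hc)
    exact (mul_eq_zero.mp h1).resolve_right hD0
  have hfden : ∀ a : ℂ, a ∈ P.map Prod.snd + W → a ∉ X + P.map Prod.fst →
      f.denom.IsRoot a := by
    intro a haD haN
    have h1 := congrArg (fun p : Polynomial ℂ => p.eval a) hfB
    simp only [eval_mul] at h1
    rw [show (mprod (P.map Prod.snd + W)).eval a = 0 from isRoot_mprod.mpr haD,
      mul_zero] at h1
    have hN0 : (mprod (X + P.map Prod.fst)).eval a ≠ 0 :=
      fun hc => haN (isRoot_mprod.mp hc)
    exact (mul_eq_zero.mp h1.symm).resolve_left hN0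
  -- z₀ is not a root of f.num
  have hz₀f : ¬ f.num.IsRoot z₀ := by
    intro hr
    have h1 := congrArg (rootMultiplicity z₀) hfC
    rw [rootMultiplicity_mul (mul_ne_zero hfnum_ne
        (mul_ne_zero (X_sub_C_ne_zero y₀) (RatFunc.denom_ne_zero e))),
      rootMultiplicity_mul (mul_ne_zero (X_sub_C_ne_zero y₀) (RatFunc.denom_ne_zero e)),
      rootMultiplicity_mul (mul_ne_zero
        (mul_ne_zero (X_sub_C_ne_zero z₀) (RatFunc.num_ne_zero he))
        (RatFunc.denom_ne_zero f)),
      rootMultiplicity_mul (mul_ne_zero (X_sub_C_ne_zero z₀) (RatFunc.num_ne_zero he)),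
      rootMultiplicity_X_sub_C_self,
      rootMultiplicity_eq_zero (not_isRoot_of_coprime hcope.symm hz₀),
      rootMultiplicity_eq_zero (not_isRoot_of_coprime hcopf hr)] at h1
    have e3 : 0 < rootMultiplicity z₀ f.num :=
      (rootMultiplicity_pos hfnum_ne).mpr hr
    have e4 : 0 < rootMultiplicity z₀ e.denom :=
      (rootMultiplicity_pos (RatFunc.denom_ne_zero e)).mpr hz₀
    omega
  -- y₀ is not a root of f.denom
  have hy₀f : ¬ f.denom.IsRoot y₀ := by
    intro hr
    have h1 := congrArg (rootMultiplicity y₀) hfC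
    rw [rootMultiplicity_mul (mul_ne_zero hfnum_ne
        (mul_ne_zero (X_sub_C_ne_zero y₀) (RatFunc.denom_ne_zero e))),
      rootMultiplicity_mul (mul_ne_zero (X_sub_C_ne_zero y₀) (RatFunc.denom_ne_zero e)),
      rootMultiplicity_mul (mul_ne_zero
        (mul_ne_zero (X_sub_C_ne_zero z₀) (RatFunc.num_ne_zero he))
        (RatFunc.denom_ne_zero f)),
      rootMultiplicity_mul (mul_ne_zero (X_sub_C_ne_zero z₀) (RatFunc.num_ne_zero he)),
      rootMultiplicity_X_sub_C_self,
      rootMultiplicity_eq_zero (not_isRoot_of_coprime hcopf.symm hr),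
      rootMultiplicity_eq_zero (not_isRoot_of_coprime hcope hy₀),
      rootMultiplicity_eq_zero (show ¬ (Polynomial.X - C z₀).IsRoot y₀ by
        simp [IsRoot, sub_eq_zero, hy₀z₀])] at h1
    have e3 : 0 < rootMultiplicity y₀ f.denom :=
      (rootMultiplicity_pos (RatFunc.denom_ne_zero f)).mpr hr
    have e4 : 0 < rootMultiplicity y₀ e.num :=
      (rootMultiplicity_pos (RatFunc.num_ne_zero he)).mpr hy₀
    omega
  -- roots of f.num are roots of e.num, roots of f.denom are roots of e.denom
  have hez : ∀ a : ℂ, f.num.IsRoot a → e.num.IsRoot a := by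
    intro a hr
    have hane : a - z₀ ≠ 0 := sub_ne_zero.mpr fun hc => hz₀f (hc ▸ hr)
    have h1 := congrArg (fun p : Polynomial ℂ => p.eval a) hfC
    simp only [eval_mul, eval_sub, eval_X, eval_C] at h1
    rw [show f.num.eval a = 0 from hr, zero_mul] at h1
    have hfd : f.denom.eval a ≠ 0 := not_isRoot_of_coprime hcopf hr
    have h2 := (mul_eq_zero.mp h1.symm).resolve_right hfd
    exact (mul_eq_zero.mp h2).resolve_left hane
  have hep : ∀ a : ℂ, f.denom.IsRoot a → e.denom.IsRoot a := by
    intro a hr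
    have hane : a - y₀ ≠ 0 := sub_ne_zero.mpr fun hc => hy₀f (hc ▸ hr)
    have h1 := congrArg (fun p : Polynomial ℂ => p.eval a) hfC
    simp only [eval_mul, eval_sub, eval_X, eval_C] at h1
    rw [show f.denom.eval a = 0 from hr, mul_zero] at h1
    have hfn : f.num.eval a ≠ 0 := not_isRoot_of_coprime hcopf.symm hr
    have h2 := (mul_eq_zero.mp h1).resolve_left hfn
    exact (mul_eq_zero.mp h2).resolve_left hane
  -- member exclusions
  have notD_of_x : ∀ x ∈ X, x ∉ P.map Prod.snd + W := by
    intro x hx hmem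
    rcases Multiset.mem_add.mp hmem with hm | hm
    · obtain ⟨p, hp, hxp⟩ := Multiset.mem_map.mp hm
      apply hXP x hx p hp
      obtain ⟨n, hpos, hcast⟩ := hposP p hp
      have h0 : p.2 - x = 0 := by rw [hxp, sub_self]
      rw [h0]
      exact zero_mem_deltaSet hcast hpos
    · exact hXW x hx x hm ⟨0, by simp⟩
  have notD_of_y : ∀ q ∈ P, q.1 ∉ P.map Prod.snd + W := by
    intro q hq hmem
    rcases Multiset.mem_add.mp hmem with hm | hm
    · obtain ⟨p, hp, hxp⟩ := Multiset.mem_map.mp hm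
      apply hPP p hp q hq
      obtain ⟨n, hpos, hcast⟩ := hposP p hp
      obtain ⟨n', hpos', hcast'⟩ := hposP q hq
      have h0 : p.2 - q.1 = 0 := by rw [hxp, sub_self]
      rw [h0]
      exact ⟨zero_mem_deltaSet hcast hpos, zero_mem_deltaSet hcast' hpos'⟩
    · apply hWP q.1 hm q hq
      rw [sub_self]
      obtain ⟨n, hpos, hcast⟩ := hposP q hq
      exact zero_mem_deltaSet hcast hpos
  have notN_of_z : ∀ p ∈ P, p.2 ∉ X + P.map Prod.fst := by
    intro p hp hmem
    rcases Multiset.mem_add.mp hmem with hm | hm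
    · apply hXP p.2 hm p hp
      rw [sub_self]
      obtain ⟨n, hpos, hcast⟩ := hposP p hp
      exact zero_mem_deltaSet hcast hpos
    · obtain ⟨q, hq, hxq⟩ := Multiset.mem_map.mp hm
      apply hPP p hp q hq
      obtain ⟨n, hpos, hcast⟩ := hposP p hp
      obtain ⟨n', hpos', hcast'⟩ := hposP q hq
      have h0 : p.2 - q.1 = 0 := by rw [hxq, sub_self]
      rw [h0]
      exact ⟨zero_mem_deltaSet hcast hpos, zero_mem_deltaSet hcast' hpos'⟩
  have notN_of_w : ∀ w ∈ W, w ∉ X + P.map Prod.fst := by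
    intro w hw hmem
    rcases Multiset.mem_add.mp hmem with hm | hm
    · exact hXW w hm w hw ⟨0, by simp⟩
    · obtain ⟨q, hq, hxq⟩ := Multiset.mem_map.mp hm
      apply hWP w hw q hq
      have h0 : w - q.1 = 0 := by rw [hxq, sub_self]
      rw [h0]
      obtain ⟨n, hpos, hcast⟩ := hposP q hq
      exact zero_mem_deltaSet hcast hpos
  -- zeros / poles of e
  have hXe : ∀ x ∈ X, e.num.IsRoot x := fun x hx =>
    hez x (hfnum x (Multiset.mem_add.mpr (Or.inl hx)) (notD_of_x x hx))
  have hPye : ∀ q ∈ P, e.num.IsRoot q.1 := fun q hq =>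
    hez q.1 (hfnum q.1 (Multiset.mem_add.mpr (Or.inr (Multiset.mem_map.mpr ⟨q, hq, rfl⟩)))
      (notD_of_y q hq))
  have hPze : ∀ p ∈ P, e.denom.IsRoot p.2 := fun p hp =>
    hep p.2 (hfden p.2 (Multiset.mem_add.mpr (Or.inl (Multiset.mem_map.mpr ⟨p, hp, rfl⟩)))
      (notN_of_z p hp))
  have hWe : ∀ w ∈ W, e.denom.IsRoot w := fun w hw =>
    hep w (hfden w (Multiset.mem_add.mpr (Or.inr hw)) (notN_of_w w hw))
  -- key minimality consequences
  have hkey : ∀ a : ℂ, e.num.IsRoot a → z₀ - a ∉ DeltaSet y₀ z₀ := by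
    intro a ha hmem
    obtain ⟨k, hk, hklt⟩ := deltaSet_elim hn₀ hmem
    have := H1 a z₀ ha hz₀ k hk.symm
    omega
  have hkey2 : ∀ b : ℂ, e.denom.IsRoot b → b - y₀ ∉ DeltaSet y₀ z₀ := by
    intro b hb hmem
    obtain ⟨k, hk, hklt⟩ := deltaSet_elim hn₀ hmem
    have := H1 y₀ b hy₀ hb k hk.symm
    omega
  refine ⟨?_, ?_, ?_, ?_, hXW, ?_⟩
  · -- product identity
    have hsp : stdProd X ((y₀, z₀) ::ₘ P) W = lin y₀ / lin z₀ * stdProd X P W := by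
      rw [stdProd, stdProd, Multiset.map_cons, Multiset.prod_cons]
      ring
    rw [hsp, ← hprod, hfdef]
    have hy := lin_ne_zero y₀
    have hz := lin_ne_zero z₀
    field_simp
  · -- (i)
    intro p hp
    rcases Multiset.mem_cons.mp hp with heq | hp'
    · subst heq
      exact ⟨n₀, n₀pos, hn₀⟩
    · exact hposP p hp'
  · -- (ii)
    intro p hp q hq
    rcases Multiset.mem_cons.mp hp with heqp | hp' <;>
      rcases Multiset.mem_cons.mp hq with heqq | hq'
    · subst heqp; subst heqq
      rintro ⟨h1, -⟩
      obtain ⟨k, hk, hklt⟩ := deltaSet_elim hn₀ h1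
      have : k = n₀ := Nat.cast_injective (hk.symm.trans hn₀.symm)
      omega
    · subst heqp
      rintro ⟨h1, -⟩
      exact hkey q.1 (hPye q hq') h1
    · subst heqq
      rintro ⟨-, h2⟩
      exact hkey2 p.2 (hPze p hp') h2
    · exact hPP p hp' q hq'
  · -- (iii)
    intro x hx p hp
    rcases Multiset.mem_cons.mp hp with heq | hp'
    · subst heq
      exact hkey x (hXe x hx)
    · exact hXP x hx p hp'
  · -- (v)
    intro w hw p hp
    rcases Multiset.mem_cons.mp hp with heq | hp'
    · subst heq
      exact hkey2 w (hWe w hw)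
    · exact hWP w hw p hp'
end
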